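/- arXiv:1911.11540 — 6 statements merged into one kernel-verified Lean document; each statement's English description precedes it below -/
import Mathlib

section
/- For every σ² > 0, every a_k > 0 (k = 1..K) and every matrix V = (v_{f,k}) ∈ ℝ^{F×K} with v_{f,k} ≥ 0, there exists exactly one pair (r, r̃) ∈ (0,1]^F × (0,1]^K satisfying the fixed-point system: r_f = (1 + (1/σ²) Σ_{k=1}^K v_{f,k} a_k² r̃_k)^{-1} for each f = 1..F and r̃_k = (1 + (a_k²/σ²) Σ_{f=1}^F v_{f,k} r_f)^{-1} for each k = 1..K. -/
open MeasureTheory ProbabilityTheory Matrix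

/-- The fixed-point system associated with a nonnegative matrix `V`. -/
def IsFP {F K : ℕ} (σ2 : ℝ) (a : Fin K → ℝ) (V : Matrix (Fin F) (Fin K) ℝ)
    (r : Fin F → ℝ) (rt : Fin K → ℝ) : Prop :=
  (∀ f, r f = (1 + σ2⁻¹ * ∑ k, V f k * (a k) ^ 2 * rt k)⁻¹) ∧
  (∀ k, rt k = (1 + (a k) ^ 2 / σ2 * ∑ f, V f k * r f)⁻¹)

noncomputable section FPAux

private lemma inv_le_mul_inv_aux {x y α : ℝ} (hx : 0 < x) (hy : 0 < y)
    (h : y ≤ α * x) : x⁻¹ ≤ α * y⁻¹ := by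
  rw [← one_div, mul_comm, inv_mul_eq_div, div_le_div_iff₀ hx hy]
  linarith

private lemma inv_lt_mul_inv_aux {x y α : ℝ} (hx : 0 < x) (hy : 0 < y)
    (h : y < α * x) : x⁻¹ < α * y⁻¹ := by
  rw [← one_div, mul_comm, inv_mul_eq_div, div_lt_div_iff₀ hx hy]
  linarith

variable {F K : ℕ} (σ2 : ℝ) (a : Fin K → ℝ) (V : Matrix (Fin F) (Fin K) ℝ)

/-- auxiliary map on `r̃`. -/
def Tmap (r : Fin F → ℝ) : Fin K → ℝ :=
  fun k => (1 + (a k) ^ 2 / σ2 * ∑ f, V f k * r f)⁻¹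

/-- auxiliary map on `r`. -/
def Phi (r : Fin F → ℝ) : Fin F → ℝ :=
  fun f => (1 + σ2⁻¹ * ∑ k, V f k * (a k) ^ 2 * Tmap σ2 a V r k)⁻¹

variable (hσ : 0 < σ2) (hV : ∀ f k, 0 ≤ V f k)

include hσ hV

lemma Tden_pos (r : Fin F → ℝ) (hr : ∀ f, 0 ≤ r f) (k : Fin K) :
    0 < 1 + (a k) ^ 2 / σ2 * ∑ f, V f k * r f := by
  have h1 : 0 ≤ (a k) ^ 2 / σ2 := div_nonneg (sq_nonneg _) hσ.le
  have h2 : 0 ≤ ∑ f, V f k * r f :=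
    Finset.sum_nonneg fun f _ => mul_nonneg (hV f k) (hr f)
  nlinarith

lemma Tmap_pos (r : Fin F → ℝ) (hr : ∀ f, 0 ≤ r f) (k : Fin K) :
    0 < Tmap σ2 a V r k :=
  inv_pos.2 (Tden_pos σ2 a V hσ hV r hr k)

lemma Tmap_le_one (r : Fin F → ℝ) (hr : ∀ f, 0 ≤ r f) (k : Fin K) :
    Tmap σ2 a V r k ≤ 1 := by
  have h1 : 0 ≤ (a k) ^ 2 / σ2 := div_nonneg (sq_nonneg _) hσ.le
  have h2 : 0 ≤ ∑ f, V f k * r f :=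
    Finset.sum_nonneg fun f _ => mul_nonneg (hV f k) (hr f)
  have h3 : (1:ℝ) ≤ 1 + (a k) ^ 2 / σ2 * ∑ f, V f k * r f := by nlinarith
  exact inv_le_one_of_one_le₀ h3

lemma Tmap_anti (r r' : Fin F → ℝ) (hr : ∀ f, 0 ≤ r f) (hle : ∀ f, r f ≤ r' f)
    (k : Fin K) : Tmap σ2 a V r' k ≤ Tmap σ2 a V r k := by
  have h1 : 0 ≤ (a k) ^ 2 / σ2 := div_nonneg (sq_nonneg _) hσ.le
  apply inv_anti₀ (Tden_pos σ2 a V hσ hV r hr k)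
  apply add_le_add_right
  apply mul_le_mul_of_nonneg_left _ h1
  exact Finset.sum_le_sum fun f _ => mul_le_mul_of_nonneg_left (hle f) (hV f k)

lemma Pden_pos (r : Fin F → ℝ) (hr : ∀ f, 0 ≤ r f) (f : Fin F) :
    0 < 1 + σ2⁻¹ * ∑ k, V f k * (a k) ^ 2 * Tmap σ2 a V r k := by
  have h2 : 0 ≤ ∑ k, V f k * (a k) ^ 2 * Tmap σ2 a V r k :=
    Finset.sum_nonneg fun k _ => mul_nonneg (mul_nonneg (hV f k) (sq_nonneg _))
      (Tmap_pos σ2 a V hσ hV r hr k).le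
  have h3 := mul_nonneg (inv_pos.2 hσ).le h2
  linarith

lemma Phi_pos (r : Fin F → ℝ) (hr : ∀ f, 0 ≤ r f) (f : Fin F) :
    0 < Phi σ2 a V r f :=
  inv_pos.2 (Pden_pos σ2 a V hσ hV r hr f)

lemma Phi_le_one (r : Fin F → ℝ) (hr : ∀ f, 0 ≤ r f) (f : Fin F) :
    Phi σ2 a V r f ≤ 1 := by
  have h2 : 0 ≤ ∑ k, V f k * (a k) ^ 2 * Tmap σ2 a V r k :=
    Finset.sum_nonneg fun k _ => mul_nonneg (mul_nonneg (hV f k) (sq_nonneg _))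
      (Tmap_pos σ2 a V hσ hV r hr k).le
  have h3' := mul_nonneg (inv_pos.2 hσ).le h2
  have h3 : (1:ℝ) ≤ 1 + σ2⁻¹ * ∑ k, V f k * (a k) ^ 2 * Tmap σ2 a V r k := by
    linarith
  exact inv_le_one_of_one_le₀ h3

lemma Phi_mono (r r' : Fin F → ℝ) (hr : ∀ f, 0 ≤ r f) (hle : ∀ f, r f ≤ r' f)
    (f : Fin F) : Phi σ2 a V r f ≤ Phi σ2 a V r' f := by
  have hr' : ∀ f, 0 ≤ r' f := fun f => (hr f).trans (hle f)
  apply inv_anti₀ (Pden_pos σ2 a V hσ hV r' hr' f)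
  apply add_le_add_right
  apply mul_le_mul_of_nonneg_left _ (inv_pos.2 hσ).le
  refine Finset.sum_le_sum fun k _ => ?_
  exact mul_le_mul_of_nonneg_left (Tmap_anti σ2 a V hσ hV r r' hr hle k)
    (mul_nonneg (hV f k) (sq_nonneg _))

lemma Phi_scal (r : Fin F → ℝ) (hr : ∀ f, 0 ≤ r f) (α : ℝ) (hα : 1 < α)
    (f : Fin F) : Phi σ2 a V (fun g => α * r g) f < α * Phi σ2 a V r f := by
  have hαr : ∀ g, 0 ≤ α * r g := fun g => mul_nonneg (by linarith) (hr g)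
  have hterm : ∀ k, Tmap σ2 a V r k ≤ α * Tmap σ2 a V (fun g => α * r g) k := by
    intro k
    have hd1 := Tden_pos σ2 a V hσ hV r hr k
    have hd2 := Tden_pos σ2 a V hσ hV (fun g => α * r g) hαr k
    have h1 : 0 ≤ (a k) ^ 2 / σ2 := div_nonneg (sq_nonneg _) hσ.le
    have h2 : 0 ≤ ∑ f, V f k * r f :=
      Finset.sum_nonneg fun f _ => mul_nonneg (hV f k) (hr f)
    have hsum : (∑ f, V f k * (α * r f)) = α * ∑ f, V f k * r f := by
      rw [Finset.mul_sum]; exact Finset.sum_congr rfl fun f _ => by ring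
    have hd2' : 0 < 1 + (a k) ^ 2 / σ2 * (α * ∑ f, V f k * r f) := by
      rw [← hsum]; exact hd2
    have key : 1 + (a k) ^ 2 / σ2 * (α * ∑ f, V f k * r f) ≤
        α * (1 + (a k) ^ 2 / σ2 * ∑ f, V f k * r f) := by nlinarith
    have := inv_le_mul_inv_aux hd1 hd2' key
    simpa [Tmap, hsum] using this
  have hP1 := Pden_pos σ2 a V hσ hV (fun g => α * r g) hαr f
  have hP2 := Pden_pos σ2 a V hσ hV r hr f
  have hsums : (∑ k, V f k * (a k) ^ 2 * Tmap σ2 a V r k) ≤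
      α * ∑ k, V f k * (a k) ^ 2 * Tmap σ2 a V (fun g => α * r g) k := by
    rw [Finset.mul_sum]
    refine Finset.sum_le_sum fun k _ => ?_
    calc V f k * (a k) ^ 2 * Tmap σ2 a V r k
        ≤ V f k * (a k) ^ 2 * (α * Tmap σ2 a V (fun g => α * r g) k) :=
          mul_le_mul_of_nonneg_left (hterm k) (mul_nonneg (hV f k) (sq_nonneg _))
      _ = α * (V f k * (a k) ^ 2 * Tmap σ2 a V (fun g => α * r g) k) := by ring
  have key : 1 + σ2⁻¹ * ∑ k, V f k * (a k) ^ 2 * Tmap σ2 a V r k <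
      α * (1 + σ2⁻¹ * ∑ k, V f k * (a k) ^ 2 * Tmap σ2 a V (fun g => α * r g) k) := by
    have hσi : 0 < σ2⁻¹ := inv_pos.2 hσ
    have h5 := mul_le_mul_of_nonneg_left hsums hσi.le
    nlinarith
  simp only [Phi]
  exact inv_lt_mul_inv_aux hP1 hP2 key

/-- Yates' comparison argument: any fixed point is `≤` any other. -/
lemma fp_le (hF : 1 ≤ F) (r r' : Fin F → ℝ)
    (hr : ∀ f, r f ∈ Set.Ioc (0:ℝ) 1) (hr' : ∀ f, r' f ∈ Set.Ioc (0:ℝ) 1)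
    (hfp : ∀ f, Phi σ2 a V r f = r f) (hfp' : ∀ f, Phi σ2 a V r' f = r' f) :
    ∀ f, r f ≤ r' f := by
  have : NeZero F := ⟨by omega⟩
  have hne : (Finset.univ : Finset (Fin F)).Nonempty := Finset.univ_nonempty
  set α : ℝ := Finset.univ.sup' hne (fun f => r f / r' f) with hαdef
  have hub : ∀ f, r f ≤ α * r' f := by
    intro f
    have h1 : r f / r' f ≤ α := by
      rw [hαdef]; exact Finset.le_sup' (fun f => r f / r' f) (Finset.mem_univ f)
    have h2 : 0 < r' f := (hr' f).1
    calc r f = (r f / r' f) * r' f := by field_simp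
      _ ≤ α * r' f := mul_le_mul_of_nonneg_right h1 h2.le
  obtain ⟨f0, _, hf0⟩ := Finset.exists_mem_eq_sup' hne (fun f => r f / r' f)
  have hf0eq : r f0 = α * r' f0 := by
    have h2 : 0 < r' f0 := (hr' f0).1
    rw [hαdef, hf0]; field_simp
  by_contra hcon
  push_neg at hcon
  obtain ⟨f1, hf1⟩ := hcon
  have hα1 : 1 < α := by
    by_contra hle
    push_neg at hle
    have h := hub f1
    nlinarith [(hr' f1).1]
  have hr0 : ∀ f, 0 ≤ r f := fun f => (hr f).1.le
  have hr'0 : ∀ f, 0 ≤ r' f := fun f => (hr' f).1.le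
  have step1 : Phi σ2 a V r f0 ≤ Phi σ2 a V (fun g => α * r' g) f0 :=
    Phi_mono σ2 a V hσ hV r (fun g => α * r' g) hr0 hub f0
  have step2 : Phi σ2 a V (fun g => α * r' g) f0 < α * Phi σ2 a V r' f0 :=
    Phi_scal σ2 a V hσ hV r' hr'0 α hα1 f0
  rw [hfp f0] at step1
  rw [hfp' f0] at step2
  linarith

end FPAux

/-- the fixed-point system has exactly one solution
`(r, r̃) ∈ (0,1]^F × (0,1]^K`. -/
theorem fixed_point_exists_unique
    (F K : ℕ) (hF : 1 ≤ F) (hK : 1 ≤ K) (σ2 : ℝ) (hσ : 0 < σ2)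
    (a : Fin K → ℝ) (ha : ∀ k, 0 < a k)
    (V : Matrix (Fin F) (Fin K) ℝ) (hV : ∀ f k, 0 ≤ V f k) :
    ∃! p : (Fin F → ℝ) × (Fin K → ℝ),
      (∀ f, p.1 f ∈ Set.Ioc (0 : ℝ) 1) ∧ (∀ k, p.2 k ∈ Set.Ioc (0 : ℝ) 1) ∧
        IsFP σ2 a V p.1 p.2 := by
  haveI : Fact ((0:ℝ) ≤ 1) := ⟨zero_le_one⟩
  have hmem : ∀ (x : Fin F → Set.Icc (0:ℝ) 1) (f : Fin F),
      Phi σ2 a V (fun g => (x g : ℝ)) f ∈ Set.Icc (0:ℝ) 1 := by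
    intro x f
    have hx : ∀ g, 0 ≤ ((x g : ℝ)) := fun g => (x g).2.1
    exact ⟨(Phi_pos σ2 a V hσ hV _ hx f).le, Phi_le_one σ2 a V hσ hV _ hx f⟩
  let Psi : (Fin F → Set.Icc (0:ℝ) 1) →o (Fin F → Set.Icc (0:ℝ) 1) :=
    ⟨fun x f => ⟨Phi σ2 a V (fun g => (x g : ℝ)) f, hmem x f⟩, by
      intro x y hxy f
      exact Phi_mono σ2 a V hσ hV _ _ (fun g => (x g).2.1)
        (fun g => Subtype.coe_le_coe.2 (hxy g)) f⟩
  obtain ⟨x, hx⟩ : ∃ x, Psi x = x := ⟨OrderHom.lfp Psi, OrderHom.map_lfp Psi⟩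
  set r : Fin F → ℝ := fun f => (x f : ℝ) with hrdef
  have hr0 : ∀ f, 0 ≤ r f := fun f => (x f).2.1
  have hfix : ∀ f, Phi σ2 a V r f = r f := fun f =>
    congrArg Subtype.val (congrFun hx f)
  have hrmem : ∀ f, r f ∈ Set.Ioc (0:ℝ) 1 := by
    intro f
    refine ⟨?_, (x f).2.2⟩
    rw [← hfix f]
    exact Phi_pos σ2 a V hσ hV r hr0 f
  set rt : Fin K → ℝ := Tmap σ2 a V r with hrtdef
  refine ⟨⟨r, rt⟩, ⟨hrmem, ?_, ?_, ?_⟩, ?_⟩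
  · intro k
    exact ⟨Tmap_pos σ2 a V hσ hV r hr0 k, Tmap_le_one σ2 a V hσ hV r hr0 k⟩
  · intro f
    exact (hfix f).symm
  · intro k
    rfl
  · rintro ⟨r', rt'⟩ ⟨hr'mem, hrt'mem, hfp1, hfp2⟩
    have hrt' : rt' = Tmap σ2 a V r' := funext fun k => hfp2 k
    have hfix' : ∀ f, Phi σ2 a V r' f = r' f := by
      intro f
      simp only [Phi]
      rw [← hrt', ← hfp1 f]
    have h1 := fp_le σ2 a V hσ hV hF r' r hr'mem hrmem hfix' hfix
    have h2 := fp_le σ2 a V hσ hV hF r r' hrmem hr'mem hfix hfix'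
    have hreq : r' = r := funext fun f => le_antisymm (h1 f) (h2 f)
    simp only [Prod.mk.injEq]
    exact ⟨hreq, by rw [hrt', hreq]⟩
end

section
/- The equation r = (1 + (1/F) Σ_{k=1}^K P_k a_k²/(σ² + P_k a_k² r))^{-1} has exactly one solution r* in the interval (0,1]. -/
open MeasureTheory ProbabilityTheory Matrix

private lemma scalar_fp_aux (F K : ℕ) (hF : 1 ≤ F) (σ2 : ℝ) (hσ : 0 < σ2)
    (c : Fin K → ℝ) (hc : ∀ k, 0 < c k) :
    ∃! r : ℝ, r ∈ Set.Ioc (0 : ℝ) 1 ∧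
      r = (1 + (F : ℝ)⁻¹ * ∑ k, c k / (σ2 + c k * r))⁻¹ := by
  have hFpos : (0:ℝ) < (F:ℝ) := by exact_mod_cast hF
  have hFinv : (0:ℝ) ≤ (F:ℝ)⁻¹ := inv_nonneg.2 hFpos.le
  set φ : ℝ → ℝ := fun r => r + (F:ℝ)⁻¹ * ∑ k, c k * r / (σ2 + c k * r) with hφ
  have hden : ∀ (k : Fin K) (r : ℝ), 0 ≤ r → 0 < σ2 + c k * r := fun k r hr =>
    lt_of_lt_of_le hσ (by nlinarith [ (hc k).le ])
  -- strict monotonicity on Ici 0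
  have hmono : StrictMonoOn φ (Set.Ici (0:ℝ)) := by
    intro x hx y hy hxy
    have hsum : ∀ k, c k * x / (σ2 + c k * x) ≤ c k * y / (σ2 + c k * y) := by
      intro k
      have hdx := hden k x hx
      have hdy := hden k y hy
      rw [div_le_div_iff₀ hdx hdy]
      nlinarith [mul_le_mul_of_nonneg_left hxy.le (mul_pos (hc k) hσ).le]
    have : ∑ k, c k * x / (σ2 + c k * x) ≤ ∑ k, c k * y / (σ2 + c k * y) :=
      Finset.sum_le_sum fun k _ => hsum k
    have := mul_le_mul_of_nonneg_left this hFinv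
    simpa [hφ] using add_lt_add_of_lt_of_le hxy this
  -- continuity on Icc 0 1
  have hcont : ContinuousOn φ (Set.Icc (0:ℝ) 1) := by
    apply ContinuousOn.add continuousOn_id
    apply ContinuousOn.mul continuousOn_const
    apply continuousOn_finset_sum
    intro k _
    apply ContinuousOn.div
    · exact (continuous_const.mul continuous_id).continuousOn
    · exact (continuous_const.add (continuous_const.mul continuous_id)).continuousOn
    · intro r hr
      exact (hden k r hr.1).ne'
  have hφ0 : φ 0 = 0 := by simp [hφ]
  have hφ1 : 1 ≤ φ 1 := by
    have : 0 ≤ (F:ℝ)⁻¹ * ∑ k, c k * 1 / (σ2 + c k * 1) := by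
      apply mul_nonneg hFinv
      apply Finset.sum_nonneg
      intro k _
      exact div_nonneg (by nlinarith [hc k]) (hden k 1 zero_le_one).le
    simp only [hφ]
    linarith
  -- existence via IVT
  obtain ⟨r, hrmem, hrφ⟩ : ∃ r ∈ Set.Icc (0:ℝ) 1, φ r = 1 := by
    have := intermediate_value_Icc (zero_le_one) hcont
    have h1 : (1:ℝ) ∈ Set.Icc (φ 0) (φ 1) := by rw [hφ0]; exact ⟨zero_le_one, hφ1⟩
    obtain ⟨r, hr, hrφ⟩ := this h1
    exact ⟨r, hr, hrφ⟩
  have hr0 : 0 < r := by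
    rcases lt_or_eq_of_le hrmem.1 with h | h
    · exact h
    · exfalso; rw [← h] at hrφ; rw [hφ0] at hrφ; norm_num at hrφ
  -- the key equivalence
  have key : ∀ s : ℝ, s ∈ Set.Ioc (0:ℝ) 1 →
      (s = (1 + (F:ℝ)⁻¹ * ∑ k, c k / (σ2 + c k * s))⁻¹ ↔ φ s = 1) := by
    intro s hs
    set t : ℝ := 1 + (F:ℝ)⁻¹ * ∑ k, c k / (σ2 + c k * s) with ht
    have htpos : 0 < t := by
      have : 0 ≤ (F:ℝ)⁻¹ * ∑ k, c k / (σ2 + c k * s) := by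
        apply mul_nonneg hFinv
        apply Finset.sum_nonneg
        intro k _
        exact div_nonneg (hc k).le (hden k s hs.1.le).le
      rw [ht]; linarith
    have hsum : ∑ k, c k * s / (σ2 + c k * s) = s * ∑ k, c k / (σ2 + c k * s) := by
      rw [Finset.mul_sum]
      exact Finset.sum_congr rfl fun k _ => by ring
    have hrt : s * t = φ s := by
      simp only [hφ, ht, hsum]; ring
    constructor
    · intro h
      rw [← hrt, h, inv_mul_cancel₀ htpos.ne']
    · intro h
      rw [h] at hrt
      exact eq_inv_of_mul_eq_one_left hrt
  refine ⟨r, ⟨⟨hr0, hrmem.2⟩, (key r ⟨hr0, hrmem.2⟩).mpr hrφ⟩, ?_⟩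
  rintro s ⟨hs, hseq⟩
  have hφs : φ s = 1 := (key s hs).mp hseq
  exact hmono.injOn (Set.mem_Ici.2 hs.1.le) (Set.mem_Ici.2 hr0.le) (by rw [hφs, hrφ])

/-- the scalar fixed-point equation
`r = (1 + (1/F) Σ_k P_k a_k²/(σ² + P_k a_k² r))⁻¹` has exactly one solution in `(0,1]`. -/
theorem scalar_fixed_point_exists_unique
    (F K : ℕ) (hF : 1 ≤ F) (hK : 1 ≤ K) (σ2 : ℝ) (hσ : 0 < σ2)
    (a Pk : Fin K → ℝ) (ha : ∀ k, 0 < a k) (hPk : ∀ k, 0 < Pk k) :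
    ∃! r : ℝ, r ∈ Set.Ioc (0 : ℝ) 1 ∧
      r = (1 + (F : ℝ)⁻¹ *
        ∑ k, Pk k * (a k) ^ 2 / (σ2 + Pk k * (a k) ^ 2 * r))⁻¹ := by
  exact scalar_fp_aux F K hF σ2 hσ (fun k => Pk k * (a k) ^ 2)
    (fun k => mul_pos (hPk k) (pow_pos (ha k) 2))
end

section
/- If V ∈ C₂ satisfies the allocation system, namely Σ_{f=1}^F v_{f,k} = P_k for every k and Σ_{k=1}^K β_k v_{f,k} = 1/r* − 1 for every f, then V is a global maximizer of the deterministic EMI over C₂: J̄(V,σ²) ≥ J̄(V',σ²) for every V' ∈ C₂. -/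
open MeasureTheory ProbabilityTheory Matrix

/-- The deterministic-equivalent EMI formula `J̄(V,σ²)` evaluated at a solution `(r, r̃)`
of the fixed-point system. -/
noncomputable def detEMIbar {F K : ℕ} (σ2 : ℝ) (a : Fin K → ℝ)
    (V : Matrix (Fin F) (Fin K) ℝ) (r : Fin F → ℝ) (rt : Fin K → ℝ) : ℝ :=
  (F : ℝ)⁻¹ * ∑ k, Real.log (1 + (a k) ^ 2 / σ2 * ∑ f, V f k * r f)
  + (F : ℝ)⁻¹ * ∑ f, Real.log (1 + σ2⁻¹ * ∑ k, V f k * (a k) ^ 2 * rt k)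
  - (σ2 * F)⁻¹ * ∑ f, ∑ k, V f k * (a k) ^ 2 * r f * rt k

open Classical

/-- `(r, r̃)` is the solution of the fixed-point system lying in `(0,1]^F × (0,1]^K`. -/
def FPsol {F K : ℕ} (σ2 : ℝ) (a : Fin K → ℝ) (V : Matrix (Fin F) (Fin K) ℝ)
    (r : Fin F → ℝ) (rt : Fin K → ℝ) : Prop :=
  (∀ f, r f ∈ Set.Ioc (0 : ℝ) 1) ∧ (∀ k, rt k ∈ Set.Ioc (0 : ℝ) 1) ∧
    IsFP σ2 a V r rt

/-- The deterministic-equivalent EMI `J̄(V,σ²)`, as a function of `V` alone, evaluated at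
the (unique) solution of the fixed-point system in `(0,1]^F × (0,1]^K`. -/
noncomputable def detEMI {F K : ℕ} (σ2 : ℝ) (a : Fin K → ℝ)
    (V : Matrix (Fin F) (Fin K) ℝ) : ℝ :=
  if h : ∃ r : Fin F → ℝ, ∃ rt : Fin K → ℝ, FPsol σ2 a V r rt then
    detEMIbar σ2 a V h.choose h.choose_spec.choose
  else 0

private lemma log_tangent {u x : ℝ} (hu : 0 < u) (hx : 0 < x) :
    Real.log u ≤ Real.log x + (u - x) / x := by
  have h := Real.log_le_sub_one_of_pos (div_pos hu hx)
  rw [Real.log_div hu.ne' hx.ne'] at h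
  have h2 : u / x - 1 = (u - x) / x := by field_simp
  linarith

private lemma one_sub_inv_le_log {x : ℝ} (hx : 0 < x) : 1 - x⁻¹ ≤ Real.log x := by
  have h := Real.log_le_sub_one_of_pos (inv_pos.mpr hx)
  rw [Real.log_inv] at h
  linarith

private lemma keyF {t ρ : ℝ} (ht : 0 < t) (hρ : 0 < ρ) :
    (t - Real.log t - 1) + (1 - t) * (Real.log t - Real.log ρ) ≤ ρ - Real.log ρ - 1 := by
  have h := Real.log_le_sub_one_of_pos (div_pos hρ ht)
  rw [Real.log_div hρ.ne' ht.ne'] at h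
  have h2 : t * (Real.log ρ - Real.log t) ≤ ρ - t := by
    have h3 := mul_le_mul_of_nonneg_left h ht.le
    have h4 : t * (ρ / t - 1) = ρ - t := by field_simp
    nlinarith
  nlinarith

private lemma core_ineq {F K : ℕ}
    (w : Fin F → Fin K → ℝ) (q : Fin K → ℝ) (ρ : ℝ)
    (r : Fin F → ℝ) (rt : Fin K → ℝ)
    (hw : ∀ f k, 0 ≤ w f k) (hq : ∀ k, ∑ f, w f k ≤ q k)
    (hρ : 0 < ρ)
    (hrpos : ∀ f, 0 < r f) (hrtpos : ∀ k, 0 < rt k)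
    (hfpr : ∀ f, r f = (1 + ∑ k, w f k * rt k)⁻¹)
    (hfpt : ∀ k, rt k = (1 + ∑ f, w f k * r f)⁻¹) :
    ((∑ k, Real.log (1 + ∑ f, w f k * r f)) +
      ∑ f, (Real.log (1 + ∑ k, w f k * rt k) - r f * ∑ k, w f k * rt k))
    ≤ (∑ k, Real.log (1 + q k * ρ)) + (F : ℝ) * (ρ - Real.log ρ - 1) := by
  have hd0 : ∀ f, 0 ≤ ∑ k, w f k * rt k := fun f =>
    Finset.sum_nonneg fun k _ => mul_nonneg (hw f k) (hrtpos k).le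
  have hm0 : ∀ k, 0 ≤ ∑ f, w f k * r f := fun k =>
    Finset.sum_nonneg fun f _ => mul_nonneg (hw f k) (hrpos f).le
  have hdpos : ∀ f, (0:ℝ) < 1 + ∑ k, w f k * rt k := fun f => by linarith [hd0 f]
  have hmpos : ∀ k, (0:ℝ) < 1 + ∑ f, w f k * r f := fun k => by linarith [hm0 k]
  have hrprod : ∀ f, r f * (1 + ∑ k, w f k * rt k) = 1 := fun f => by
    rw [hfpr f]; exact inv_mul_cancel₀ (hdpos f).ne'
  have hrtprod : ∀ k, rt k * (1 + ∑ f, w f k * r f) = 1 := fun k => by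
    rw [hfpt k]; exact inv_mul_cancel₀ (hmpos k).ne'
  -- rewrite of per-f terms
  have hA : ∀ f, Real.log (1 + ∑ k, w f k * rt k) - r f * ∑ k, w f k * rt k
      = r f - Real.log (r f) - 1 := by
    intro f
    have hlog : Real.log (r f) = - Real.log (1 + ∑ k, w f k * rt k) := by
      rw [hfpr f, Real.log_inv]
    have h3 : r f * ∑ k, w f k * rt k = 1 - r f := by linear_combination hrprod f
    rw [h3, hlog]; ring
  rw [Finset.sum_congr rfl fun f _ => hA f]
  -- key per-k inequality
  have hB : ∀ k, Real.log (1 + ∑ f, w f k * r f) ≤ Real.log (1 + q k * ρ)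
      + ∑ f, (w f k * r f * rt k) * (Real.log (r f) - Real.log ρ) := by
    intro k
    have hτ : 0 < rt k := hrtpos k
    have hS0 : 0 ≤ ∑ f, w f k := Finset.sum_nonneg fun f _ => hw f k
    have hp'0 : 0 ≤ ρ * ∑ f, w f k := mul_nonneg hρ.le hS0
    have h1p : (0:ℝ) < 1 + ρ * ∑ f, w f k := by linarith
    set x := (1 + ρ * ∑ f, w f k) * rt k with hxdef
    have hxpos : 0 < x := mul_pos h1p hτ
    have htan : ∀ f ∈ (Finset.univ : Finset (Fin F)),
        (w f k * r f * rt k) * (Real.log ρ - Real.log (r f))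
        ≤ (w f k * r f * rt k) * Real.log x
            + (w f k * rt k * ρ - (w f k * r f * rt k) * x) / x := by
      intro f _
      have hu : 0 < ρ / r f := div_pos hρ (hrpos f)
      have h1 : Real.log (ρ / r f) ≤ Real.log x + (ρ / r f - x) / x := log_tangent hu hxpos
      have hlam : 0 ≤ w f k * r f * rt k :=
        mul_nonneg (mul_nonneg (hw f k) (hrpos f).le) hτ.le
      have h2 := mul_le_mul_of_nonneg_left h1 hlam
      have hrne : r f ≠ 0 := (hrpos f).ne'
      have hxne : x ≠ 0 := hxpos.ne'
      have e1 : (w f k * r f * rt k) * Real.log (ρ / r f)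
          = (w f k * r f * rt k) * (Real.log ρ - Real.log (r f)) := by
        rw [Real.log_div hρ.ne' hrne]
      have e2 : (w f k * r f * rt k) * (Real.log x + (ρ / r f - x) / x)
          = (w f k * r f * rt k) * Real.log x
              + (w f k * rt k * ρ - (w f k * r f * rt k) * x) / x := by
        field_simp
      rw [e1, e2] at h2
      exact h2
    have hsum := Finset.sum_le_sum htan
    have hSl : ∑ f, w f k * r f * rt k = 1 - rt k := by
      have h1 : ∑ f, w f k * r f * rt k = (∑ f, w f k * r f) * rt k := by
        rw [Finset.sum_mul]
      rw [h1]; linear_combination hrtprod k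
    have hSlu : ∑ f, w f k * rt k * ρ = x - rt k := by
      have h1 : ∑ f, w f k * rt k * ρ = (∑ f, w f k) * (rt k * ρ) := by
        rw [Finset.sum_mul]
        exact Finset.sum_congr rfl fun f _ => by ring
      rw [h1, hxdef]; ring
    have hRHS : ∑ f, ((w f k * r f * rt k) * Real.log x
          + (w f k * rt k * ρ - (w f k * r f * rt k) * x) / x)
        = (1 - rt k) * Real.log x + (rt k * x - rt k) / x := by
      rw [Finset.sum_add_distrib, ← Finset.sum_mul, hSl, ← Finset.sum_div,
        Finset.sum_sub_distrib, hSlu, ← Finset.sum_mul, hSl]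
      congr 1
      rw [show x - rt k - (1 - rt k) * x = rt k * x - rt k from by ring]
    have hlast : (rt k * x - rt k) / x ≤ rt k * Real.log x := by
      have h1 : 1 - x⁻¹ ≤ Real.log x := one_sub_inv_le_log hxpos
      have h2 : (rt k * x - rt k) / x = rt k * (1 - x⁻¹) := by
        field_simp
      rw [h2]; exact mul_le_mul_of_nonneg_left h1 hτ.le
    have hmain : ∑ f, (w f k * r f * rt k) * (Real.log ρ - Real.log (r f))
        ≤ Real.log x := by
      calc ∑ f, (w f k * r f * rt k) * (Real.log ρ - Real.log (r f))
          ≤ (1 - rt k) * Real.log x + (rt k * x - rt k) / x := by rw [← hRHS]; exact hsum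
        _ ≤ (1 - rt k) * Real.log x + rt k * Real.log x := by linarith
        _ = Real.log x := by ring
    have hlogx : Real.log x
        = Real.log (1 + ρ * ∑ f, w f k) - Real.log (1 + ∑ f, w f k * r f) := by
      rw [hxdef, Real.log_mul h1p.ne' hτ.ne', hfpt k, Real.log_inv]; ring
    have hlog1 : Real.log (1 + ρ * ∑ f, w f k) ≤ Real.log (1 + q k * ρ) := by
      apply Real.log_le_log h1p
      nlinarith [mul_le_mul_of_nonneg_left (hq k) hρ.le]
    have hneg : ∑ f, (w f k * r f * rt k) * (Real.log (r f) - Real.log ρ)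
        = - ∑ f, (w f k * r f * rt k) * (Real.log ρ - Real.log (r f)) := by
      rw [← Finset.sum_neg_distrib]
      exact Finset.sum_congr rfl fun f _ => by ring
    rw [hneg]
    linarith
  have hsumB := Finset.sum_le_sum fun k (_ : k ∈ Finset.univ) => hB k
  rw [Finset.sum_add_distrib] at hsumB
  have hswap : ∑ k, ∑ f, (w f k * r f * rt k) * (Real.log (r f) - Real.log ρ)
      = ∑ f, (1 - r f) * (Real.log (r f) - Real.log ρ) := by
    rw [Finset.sum_comm]
    refine Finset.sum_congr rfl fun f _ => ?_
    have h1 : (r f * ∑ k, w f k * rt k) * (Real.log (r f) - Real.log ρ)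
        = ∑ k, (w f k * r f * rt k) * (Real.log (r f) - Real.log ρ) := by
      rw [Finset.mul_sum, Finset.sum_mul]
      exact Finset.sum_congr rfl fun k _ => by ring
    rw [← h1]
    have h2 : r f * ∑ k, w f k * rt k = 1 - r f := by linear_combination hrprod f
    rw [h2]
  rw [hswap] at hsumB
  have h6 : ∑ f, ((r f - Real.log (r f) - 1) + (1 - r f) * (Real.log (r f) - Real.log ρ))
      ≤ ∑ f : Fin F, (ρ - Real.log ρ - 1) :=
    Finset.sum_le_sum fun f _ => keyF (hrpos f) hρ
  rw [Finset.sum_add_distrib] at h6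
  have h7 : ∑ _f : Fin F, (ρ - Real.log ρ - 1) = (F:ℝ) * (ρ - Real.log ρ - 1) := by
    rw [Finset.sum_const, Finset.card_univ, Fintype.card_fin, nsmul_eq_mul]
  rw [h7] at h6
  linarith

/-- The key algebraic identity turning the allocation system row condition into the
fixed-point form. -/
private lemma beta_sum {F K : ℕ} {σ2 : ℝ} (hσ : 0 < σ2)
    (a Pk : Fin K → ℝ) (ha : ∀ k, 0 < a k) (hPk : ∀ k, 0 < Pk k)
    {rstar : ℝ} (hρ : 0 < rstar)
    (V : Matrix (Fin F) (Fin K) ℝ)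
    (halloc2 : ∀ f, ∑ k, (a k) ^ 2 / (σ2 + Pk k * (a k) ^ 2 * rstar) * V f k
        = 1 / rstar - 1)
    (f : Fin F) :
    σ2⁻¹ * ∑ k, V f k * a k ^ 2 * (1 + Pk k * a k ^ 2 / σ2 * rstar)⁻¹
      = 1 / rstar - 1 := by
  rw [← halloc2 f, Finset.mul_sum]
  refine Finset.sum_congr rfl fun k _ => ?_
  have h0 : (0:ℝ) ≤ Pk k * a k ^ 2 * rstar :=
    mul_nonneg (mul_nonneg (hPk k).le (sq_nonneg _)) hρ.le
  have h1 : (0:ℝ) < σ2 + Pk k * a k ^ 2 * rstar := by linarith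
  have h0' : (0:ℝ) ≤ Pk k * a k ^ 2 / σ2 * rstar :=
    mul_nonneg (div_nonneg (mul_nonneg (hPk k).le (sq_nonneg _)) hσ.le) hρ.le
  have h2 : (0:ℝ) < 1 + Pk k * a k ^ 2 / σ2 * rstar := by linarith
  have h1' := h1.ne'
  have h2' := h2.ne'
  have hσ' := hσ.ne'
  field_simp

private lemma FPsol_V {F K : ℕ} {σ2 : ℝ} (hσ : 0 < σ2)
    (a Pk : Fin K → ℝ) (ha : ∀ k, 0 < a k) (hPk : ∀ k, 0 < Pk k)
    {rstar : ℝ} (hr1 : rstar ∈ Set.Ioc (0 : ℝ) 1)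
    (V : Matrix (Fin F) (Fin K) ℝ)
    (halloc1 : ∀ k, ∑ f, V f k = Pk k)
    (halloc2 : ∀ f, ∑ k, (a k) ^ 2 / (σ2 + Pk k * (a k) ^ 2 * rstar) * V f k
        = 1 / rstar - 1) :
    FPsol σ2 a V (fun _ => rstar)
      (fun k => (1 + Pk k * a k ^ 2 / σ2 * rstar)⁻¹) := by
  obtain ⟨hρ, hρ1⟩ := hr1
  have h2 : ∀ k, (0:ℝ) < 1 + Pk k * a k ^ 2 / σ2 * rstar := by
    intro k
    have h0' : (0:ℝ) ≤ Pk k * a k ^ 2 / σ2 * rstar :=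
      mul_nonneg (div_nonneg (mul_nonneg (hPk k).le (sq_nonneg _)) hσ.le) hρ.le
    linarith
  refine ⟨fun f => ⟨hρ, hρ1⟩, fun k => ⟨inv_pos.mpr (h2 k), ?_⟩, ?_, ?_⟩
  · apply inv_le_one_of_one_le₀
    have h0' : (0:ℝ) ≤ Pk k * a k ^ 2 / σ2 * rstar :=
      mul_nonneg (div_nonneg (mul_nonneg (hPk k).le (sq_nonneg _)) hσ.le) hρ.le
    linarith
  · intro f
    rw [beta_sum hσ a Pk ha hPk hρ V halloc2 f]
    rw [show (1:ℝ) + (1 / rstar - 1) = rstar⁻¹ by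
      rw [one_div]; ring]
    rw [inv_inv]
  · intro k
    rw [← Finset.sum_mul, halloc1 k]
    rw [show a k ^ 2 / σ2 * (Pk k * rstar) = Pk k * a k ^ 2 / σ2 * rstar from by ring]

private lemma inv_scaled_le_inv {A B t ρ : ℝ} (hA : 0 < A) (hB : 0 < B) (ht : 0 < t)
    (h : ρ * B ≤ A * t) : A⁻¹ * (ρ / t) ≤ B⁻¹ := by
  have hA' := hA.ne'
  have ht' := ht.ne'
  have e : A⁻¹ * (ρ / t) = ρ / (A * t) := by field_simp
  rw [e, inv_eq_one_div, div_le_div_iff₀ (by positivity) hB]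
  linarith

private lemma inv_le_inv_scaled {A B t ρ : ℝ} (hA : 0 < A) (hB : 0 < B) (ht : 0 < t)
    (h : A * t ≤ ρ * B) : B⁻¹ ≤ A⁻¹ * (ρ / t) := by
  have hA' := hA.ne'
  have ht' := ht.ne'
  have e : A⁻¹ * (ρ / t) = ρ / (A * t) := by field_simp
  rw [e, inv_eq_one_div, div_le_div_iff₀ hB (by positivity)]
  linarith

private lemma FPsol_unique {F K : ℕ} (hF : 1 ≤ F) {σ2 : ℝ} (hσ : 0 < σ2)
    (a Pk : Fin K → ℝ) (ha : ∀ k, 0 < a k) (hPk : ∀ k, 0 < Pk k)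
    {rstar : ℝ} (hρ : 0 < rstar)
    (V : Matrix (Fin F) (Fin K) ℝ) (hV1 : ∀ f k, 0 ≤ V f k)
    (halloc1 : ∀ k, ∑ f, V f k = Pk k)
    (halloc2 : ∀ f, ∑ k, (a k) ^ 2 / (σ2 + Pk k * (a k) ^ 2 * rstar) * V f k
        = 1 / rstar - 1)
    {r : Fin F → ℝ} {rt : Fin K → ℝ} (hsol : FPsol σ2 a V r rt) :
    (∀ f, r f = rstar) ∧
      (∀ k, rt k = (1 + Pk k * a k ^ 2 / σ2 * rstar)⁻¹) := by
  obtain ⟨hr, hrt, hfp1, hfp2⟩ := hsol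
  have hrpos : ∀ f, 0 < r f := fun f => (hr f).1
  have hrtpos : ∀ k, 0 < rt k := fun k => (hrt k).1
  have hc : ∀ k, (0:ℝ) ≤ a k ^ 2 / σ2 := fun k => div_nonneg (sq_nonneg _) hσ.le
  have hA : ∀ k, (0:ℝ) < 1 + Pk k * a k ^ 2 / σ2 * rstar := by
    intro k
    have : (0:ℝ) ≤ Pk k * a k ^ 2 / σ2 * rstar :=
      mul_nonneg (div_nonneg (mul_nonneg (hPk k).le (sq_nonneg _)) hσ.le) hρ.le
    linarith
  have hdenpos : ∀ k, (0:ℝ) < 1 + a k ^ 2 / σ2 * ∑ f, V f k * r f := by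
    intro k
    have : (0:ℝ) ≤ a k ^ 2 / σ2 * ∑ f, V f k * r f :=
      mul_nonneg (hc k) (Finset.sum_nonneg fun f _ =>
        mul_nonneg (hV1 f k) (hrpos f).le)
    linarith
  have hDnn : ∀ f, (0:ℝ) ≤ σ2⁻¹ * ∑ k, V f k * a k ^ 2 * rt k := by
    intro f
    exact mul_nonneg (inv_nonneg.mpr hσ.le) (Finset.sum_nonneg fun k _ =>
      mul_nonneg (mul_nonneg (hV1 f k) (sq_nonneg _)) (hrtpos k).le)
  have hprod : ∀ f, r f * (1 + σ2⁻¹ * ∑ k, V f k * a k ^ 2 * rt k) = 1 := by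
    intro f
    have hpos : (0:ℝ) < 1 + σ2⁻¹ * ∑ k, V f k * a k ^ 2 * rt k := by
      have := hDnn f; linarith
    rw [hfp1 f]
    exact inv_mul_cancel₀ hpos.ne'
  -- upper bound : all r f ≤ rstar
  have hub : ∀ f, r f ≤ rstar := by
    obtain ⟨f0, -, hmax⟩ := Finset.exists_max_image Finset.univ r
      ⟨⟨0, by omega⟩, Finset.mem_univ _⟩
    have hM : 0 < r f0 := hrpos f0
    have hle : r f0 ≤ rstar := by
      by_contra hcon
      push_neg at hcon
      have hrtlb : ∀ k,
          (1 + Pk k * a k ^ 2 / σ2 * rstar)⁻¹ * (rstar / r f0) ≤ rt k := by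
        intro k
        have hsum_le : ∑ f, V f k * r f ≤ Pk k * r f0 := by
          calc ∑ f, V f k * r f ≤ ∑ f, V f k * r f0 :=
                Finset.sum_le_sum fun f _ =>
                  mul_le_mul_of_nonneg_left (hmax f (Finset.mem_univ f)) (hV1 f k)
            _ = Pk k * r f0 := by rw [← Finset.sum_mul, halloc1 k]
        have hden2 : (0:ℝ) < 1 + a k ^ 2 / σ2 * (Pk k * r f0) := by
          have : (0:ℝ) ≤ a k ^ 2 / σ2 * (Pk k * r f0) :=
            mul_nonneg (hc k) (mul_nonneg (hPk k).le hM.le)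
          linarith
        have h1 : (1 + a k ^ 2 / σ2 * (Pk k * r f0))⁻¹ ≤ rt k := by
          rw [hfp2 k]
          apply inv_anti₀ (hdenpos k)
          have := mul_le_mul_of_nonneg_left hsum_le (hc k)
          linarith
        refine le_trans ?_ h1
        apply inv_scaled_le_inv (hA k) hden2 hM
        have e : (1 + Pk k * a k ^ 2 / σ2 * rstar) * r f0
            - rstar * (1 + a k ^ 2 / σ2 * (Pk k * r f0)) = r f0 - rstar := by ring
        linarith [hcon.le]
      have h6 := beta_sum hσ a Pk ha hPk hρ V halloc2 f0
      have h4 : ∑ k, V f0 k * a k ^ 2 *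
            ((1 + Pk k * a k ^ 2 / σ2 * rstar)⁻¹ * (rstar / r f0))
          ≤ ∑ k, V f0 k * a k ^ 2 * rt k :=
        Finset.sum_le_sum fun k _ =>
          mul_le_mul_of_nonneg_left (hrtlb k)
            (mul_nonneg (hV1 f0 k) (sq_nonneg _))
      have h5 : σ2⁻¹ * ∑ k, V f0 k * a k ^ 2 *
            ((1 + Pk k * a k ^ 2 / σ2 * rstar)⁻¹ * (rstar / r f0))
          = (rstar / r f0) * (σ2⁻¹ * ∑ k, V f0 k * a k ^ 2 *
              (1 + Pk k * a k ^ 2 / σ2 * rstar)⁻¹) := by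
        rw [Finset.mul_sum, Finset.mul_sum, Finset.mul_sum]
        exact Finset.sum_congr rfl fun k _ => by ring
      have hDlb : (rstar / r f0) * (1 / rstar - 1)
          ≤ σ2⁻¹ * ∑ k, V f0 k * a k ^ 2 * rt k := by
        calc (rstar / r f0) * (1 / rstar - 1)
            = (rstar / r f0) * (σ2⁻¹ * ∑ k, V f0 k * a k ^ 2 *
                (1 + Pk k * a k ^ 2 / σ2 * rstar)⁻¹) := by rw [h6]
          _ = σ2⁻¹ * ∑ k, V f0 k * a k ^ 2 *
                ((1 + Pk k * a k ^ 2 / σ2 * rstar)⁻¹ * (rstar / r f0)) := h5.symm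
          _ ≤ σ2⁻¹ * ∑ k, V f0 k * a k ^ 2 * rt k :=
              mul_le_mul_of_nonneg_left h4 (inv_nonneg.mpr hσ.le)
      have h7 : r f0 * ((rstar / r f0) * (1 / rstar - 1)) = 1 - rstar := by
        field_simp
      have h8 := mul_le_mul_of_nonneg_left hDlb hM.le
      have h9 := hprod f0
      nlinarith [h7, h8, h9, hcon]
    intro f
    exact le_trans (hmax f (Finset.mem_univ f)) hle
  -- lower bound : all r f ≥ rstar
  have hlb : ∀ f, rstar ≤ r f := by
    obtain ⟨f1, -, hmin⟩ := Finset.exists_min_image Finset.univ r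
      ⟨⟨0, by omega⟩, Finset.mem_univ _⟩
    have hM : 0 < r f1 := hrpos f1
    have hge : rstar ≤ r f1 := by
      by_contra hcon
      push_neg at hcon
      have hrtub : ∀ k,
          rt k ≤ (1 + Pk k * a k ^ 2 / σ2 * rstar)⁻¹ * (rstar / r f1) := by
        intro k
        have hsum_ge : Pk k * r f1 ≤ ∑ f, V f k * r f := by
          calc Pk k * r f1 = ∑ f, V f k * r f1 := by rw [← Finset.sum_mul, halloc1 k]
            _ ≤ ∑ f, V f k * r f :=
                Finset.sum_le_sum fun f _ =>
                  mul_le_mul_of_nonneg_left (hmin f (Finset.mem_univ f)) (hV1 f k)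
        have hden2 : (0:ℝ) < 1 + a k ^ 2 / σ2 * (Pk k * r f1) := by
          have : (0:ℝ) ≤ a k ^ 2 / σ2 * (Pk k * r f1) :=
            mul_nonneg (hc k) (mul_nonneg (hPk k).le hM.le)
          linarith
        have h1 : rt k ≤ (1 + a k ^ 2 / σ2 * (Pk k * r f1))⁻¹ := by
          rw [hfp2 k]
          apply inv_anti₀ hden2
          have := mul_le_mul_of_nonneg_left hsum_ge (hc k)
          linarith
        refine le_trans h1 ?_
        apply inv_le_inv_scaled (hA k) hden2 hM
        have e : rstar * (1 + a k ^ 2 / σ2 * (Pk k * r f1))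
            - (1 + Pk k * a k ^ 2 / σ2 * rstar) * r f1 = rstar - r f1 := by ring
        linarith [hcon.le]
      have h6 := beta_sum hσ a Pk ha hPk hρ V halloc2 f1
      have h4 : ∑ k, V f1 k * a k ^ 2 * rt k
          ≤ ∑ k, V f1 k * a k ^ 2 *
              ((1 + Pk k * a k ^ 2 / σ2 * rstar)⁻¹ * (rstar / r f1)) :=
        Finset.sum_le_sum fun k _ =>
          mul_le_mul_of_nonneg_left (hrtub k)
            (mul_nonneg (hV1 f1 k) (sq_nonneg _))
      have h5 : σ2⁻¹ * ∑ k, V f1 k * a k ^ 2 *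
            ((1 + Pk k * a k ^ 2 / σ2 * rstar)⁻¹ * (rstar / r f1))
          = (rstar / r f1) * (σ2⁻¹ * ∑ k, V f1 k * a k ^ 2 *
              (1 + Pk k * a k ^ 2 / σ2 * rstar)⁻¹) := by
        rw [Finset.mul_sum, Finset.mul_sum, Finset.mul_sum]
        exact Finset.sum_congr rfl fun k _ => by ring
      have hDub : σ2⁻¹ * ∑ k, V f1 k * a k ^ 2 * rt k
          ≤ (rstar / r f1) * (1 / rstar - 1) := by
        calc σ2⁻¹ * ∑ k, V f1 k * a k ^ 2 * rt k
            ≤ σ2⁻¹ * ∑ k, V f1 k * a k ^ 2 *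
                ((1 + Pk k * a k ^ 2 / σ2 * rstar)⁻¹ * (rstar / r f1)) :=
              mul_le_mul_of_nonneg_left h4 (inv_nonneg.mpr hσ.le)
          _ = (rstar / r f1) * (σ2⁻¹ * ∑ k, V f1 k * a k ^ 2 *
                (1 + Pk k * a k ^ 2 / σ2 * rstar)⁻¹) := h5
          _ = (rstar / r f1) * (1 / rstar - 1) := by rw [h6]
      have h7 : r f1 * ((rstar / r f1) * (1 / rstar - 1)) = 1 - rstar := by
        field_simp
      have h8 := mul_le_mul_of_nonneg_left hDub hM.le
      have h9 := hprod f1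
      nlinarith [h7, h8, h9, hcon]
    intro f
    exact le_trans hge (hmin f (Finset.mem_univ f))
  have hre : ∀ f, r f = rstar := fun f => le_antisymm (hub f) (hlb f)
  refine ⟨hre, fun k => ?_⟩
  rw [hfp2 k]
  rw [show ∑ f, V f k * r f = ∑ f, V f k * rstar from
    Finset.sum_congr rfl fun f _ => by rw [hre f]]
  rw [← Finset.sum_mul, halloc1 k]
  rw [show a k ^ 2 / σ2 * (Pk k * rstar) = Pk k * a k ^ 2 / σ2 * rstar from by ring]

private lemma detEMIbar_le_T {F K : ℕ} (hF : 1 ≤ F) {σ2 : ℝ} (hσ : 0 < σ2)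
    (a Pk : Fin K → ℝ) (ha : ∀ k, 0 < a k) (hPk : ∀ k, 0 < Pk k)
    {rstar : ℝ} (hρ : 0 < rstar)
    (V' : Matrix (Fin F) (Fin K) ℝ)
    (hV1 : ∀ f k, 0 ≤ V' f k) (hV2 : ∀ k, ∑ f, V' f k ≤ Pk k)
    {r : Fin F → ℝ} {rt : Fin K → ℝ} (hsol : FPsol σ2 a V' r rt) :
    detEMIbar σ2 a V' r rt ≤
      (F : ℝ)⁻¹ * ∑ k, Real.log (1 + Pk k * a k ^ 2 / σ2 * rstar)
        + (rstar - Real.log rstar - 1) := by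
  obtain ⟨hr, hrt, hfp1, hfp2⟩ := hsol
  have hrpos : ∀ f, 0 < r f := fun f => (hr f).1
  have hrtpos : ∀ k, 0 < rt k := fun k => (hrt k).1
  have hFpos : (0:ℝ) < (F:ℝ) := by exact_mod_cast Nat.lt_of_lt_of_le Nat.zero_lt_one hF
  have hFne : (F:ℝ) ≠ 0 := hFpos.ne'
  -- apply the core inequality with w f k = V' f k * a k ^ 2 / σ2
  have hcore := core_ineq (fun f k => V' f k * a k ^ 2 / σ2)
    (fun k => Pk k * a k ^ 2 / σ2) rstar r rt
    (fun f k => div_nonneg (mul_nonneg (hV1 f k) (sq_nonneg _)) hσ.le)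
    (fun k => by
      have h1 : ∑ f, V' f k * a k ^ 2 / σ2 = (∑ f, V' f k) * (a k ^ 2 / σ2) := by
        rw [Finset.sum_mul]
        exact Finset.sum_congr rfl fun f _ => by ring
      rw [h1]
      calc (∑ f, V' f k) * (a k ^ 2 / σ2) ≤ Pk k * (a k ^ 2 / σ2) :=
            mul_le_mul_of_nonneg_right (hV2 k) (div_nonneg (sq_nonneg _) hσ.le)
        _ = Pk k * a k ^ 2 / σ2 := by ring)
    hρ hrpos hrtpos
    (fun f => by
      rw [hfp1 f]
      congr 2
      rw [Finset.mul_sum]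
      exact Finset.sum_congr rfl fun k _ => by ring)
    (fun k => by
      rw [hfp2 k]
      congr 2
      rw [Finset.mul_sum]
      exact Finset.sum_congr rfl fun f _ => by ring)
  -- rewrite detEMIbar in terms of the core quantities
  have e1 : ∑ k, Real.log (1 + a k ^ 2 / σ2 * ∑ f, V' f k * r f)
      = ∑ k, Real.log (1 + ∑ f, V' f k * a k ^ 2 / σ2 * r f) := by
    refine Finset.sum_congr rfl fun k _ => ?_
    congr 1
    rw [Finset.mul_sum]
    exact congrArg (fun z => 1 + z) (Finset.sum_congr rfl fun f _ => by ring)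
  have e2 : ∑ f, Real.log (1 + σ2⁻¹ * ∑ k, V' f k * a k ^ 2 * rt k)
      = ∑ f, Real.log (1 + ∑ k, V' f k * a k ^ 2 / σ2 * rt k) := by
    refine Finset.sum_congr rfl fun f _ => ?_
    congr 1
    rw [Finset.mul_sum]
    exact congrArg (fun z => 1 + z) (Finset.sum_congr rfl fun k _ => by ring)
  have e3 : ∑ f, ∑ k, V' f k * a k ^ 2 * r f * rt k
      = σ2 * ∑ f, (r f * ∑ k, V' f k * a k ^ 2 / σ2 * rt k) := by
    rw [Finset.mul_sum]
    refine Finset.sum_congr rfl fun f _ => ?_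
    rw [Finset.mul_sum, Finset.mul_sum]
    refine Finset.sum_congr rfl fun k _ => ?_
    field_simp
  have e4 : (σ2 * (F:ℝ))⁻¹ * (σ2 * ∑ f, (r f * ∑ k, V' f k * a k ^ 2 / σ2 * rt k))
      = (F:ℝ)⁻¹ * ∑ f, (r f * ∑ k, V' f k * a k ^ 2 / σ2 * rt k) := by
    rw [mul_inv]
    field_simp
  rw [detEMIbar, e1, e2, e3, e4]
  have hsplit : ∑ f, (Real.log (1 + ∑ k, V' f k * a k ^ 2 / σ2 * rt k)
        - r f * ∑ k, V' f k * a k ^ 2 / σ2 * rt k)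
      = ∑ f, Real.log (1 + ∑ k, V' f k * a k ^ 2 / σ2 * rt k)
        - ∑ f, (r f * ∑ k, V' f k * a k ^ 2 / σ2 * rt k) := by
    rw [Finset.sum_sub_distrib]
  have hmul := mul_le_mul_of_nonneg_left hcore (inv_nonneg.mpr hFpos.le)
  rw [hsplit] at hmul
  have hrhs : (F:ℝ)⁻¹ * ((∑ k, Real.log (1 + Pk k * a k ^ 2 / σ2 * rstar))
        + (F:ℝ) * (rstar - Real.log rstar - 1))
      = (F:ℝ)⁻¹ * ∑ k, Real.log (1 + Pk k * a k ^ 2 / σ2 * rstar)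
        + (rstar - Real.log rstar - 1) := by
    generalize (∑ k, Real.log (1 + Pk k * a k ^ 2 / σ2 * rstar)) = S
    field_simp
    all_goals ring
  rw [hrhs] at hmul
  linarith [hmul]

private lemma detEMIbar_V_value {F K : ℕ} (hF : 1 ≤ F) {σ2 : ℝ} (hσ : 0 < σ2)
    (a Pk : Fin K → ℝ) (ha : ∀ k, 0 < a k) (hPk : ∀ k, 0 < Pk k)
    {rstar : ℝ} (hρ : 0 < rstar)
    (V : Matrix (Fin F) (Fin K) ℝ) (hV1 : ∀ f k, 0 ≤ V f k)
    (halloc1 : ∀ k, ∑ f, V f k = Pk k)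
    (halloc2 : ∀ f, ∑ k, (a k) ^ 2 / (σ2 + Pk k * (a k) ^ 2 * rstar) * V f k
        = 1 / rstar - 1)
    {r : Fin F → ℝ} {rt : Fin K → ℝ} (hsol : FPsol σ2 a V r rt) :
    detEMIbar σ2 a V r rt
      = (F : ℝ)⁻¹ * ∑ k, Real.log (1 + Pk k * a k ^ 2 / σ2 * rstar)
        + (rstar - Real.log rstar - 1) := by
  obtain ⟨hre, hrte⟩ := FPsol_unique hF hσ a Pk ha hPk hρ V hV1 halloc1 halloc2 hsol
  have hFpos : (0:ℝ) < (F:ℝ) := by exact_mod_cast Nat.lt_of_lt_of_le Nat.zero_lt_one hF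
  have hFne : (F:ℝ) ≠ 0 := hFpos.ne'
  have hsum1 : ∀ k, ∑ f, V f k * r f = Pk k * rstar := by
    intro k
    rw [show ∑ f, V f k * r f = ∑ f, V f k * rstar from
      Finset.sum_congr rfl fun f _ => by rw [hre f]]
    rw [← Finset.sum_mul, halloc1 k]
  have e2 : ∀ f, σ2⁻¹ * ∑ k, V f k * a k ^ 2 * rt k = 1 / rstar - 1 := by
    intro f
    rw [show ∑ k, V f k * a k ^ 2 * rt k
        = ∑ k, V f k * a k ^ 2 * (1 + Pk k * a k ^ 2 / σ2 * rstar)⁻¹ from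
      Finset.sum_congr rfl fun k _ => by rw [hrte k]]
    exact beta_sum hσ a Pk ha hPk hρ V halloc2 f
  have e1 : ∑ k, Real.log (1 + a k ^ 2 / σ2 * ∑ f, V f k * r f)
      = ∑ k, Real.log (1 + Pk k * a k ^ 2 / σ2 * rstar) := by
    refine Finset.sum_congr rfl fun k _ => ?_
    rw [hsum1 k]
    rw [show a k ^ 2 / σ2 * (Pk k * rstar) = Pk k * a k ^ 2 / σ2 * rstar from by ring]
  have e2' : ∑ f, Real.log (1 + σ2⁻¹ * ∑ k, V f k * a k ^ 2 * rt k)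
      = (F:ℝ) * (- Real.log rstar) := by
    rw [show ∑ f : Fin F, Real.log (1 + σ2⁻¹ * ∑ k, V f k * a k ^ 2 * rt k)
        = ∑ _f : Fin F, (- Real.log rstar) from
      Finset.sum_congr rfl fun f _ => by
        rw [e2 f]
        rw [show (1:ℝ) + (1 / rstar - 1) = rstar⁻¹ by rw [one_div]; ring]
        rw [Real.log_inv]]
    rw [Finset.sum_const, Finset.card_univ, Fintype.card_fin, nsmul_eq_mul]
  have e3 : ∑ f, ∑ k, V f k * a k ^ 2 * r f * rt k
      = (F:ℝ) * (σ2 * (1 - rstar)) := by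
    rw [show ∑ f : Fin F, ∑ k, V f k * a k ^ 2 * r f * rt k
        = ∑ _f : Fin F, (σ2 * (1 - rstar)) from
      Finset.sum_congr rfl fun f _ => ?_]
    · rw [Finset.sum_const, Finset.card_univ, Fintype.card_fin, nsmul_eq_mul]
    · have h1 : ∑ k, V f k * a k ^ 2 * r f * rt k
          = σ2 * (rstar * (σ2⁻¹ * ∑ k, V f k * a k ^ 2 * rt k)) := by
        rw [Finset.mul_sum, Finset.mul_sum, Finset.mul_sum]
        refine Finset.sum_congr rfl fun k _ => ?_
        rw [hre f]
        field_simp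
        all_goals ring
      rw [h1, e2 f]
      field_simp
      all_goals ring
  rw [detEMIbar, e1, e2', e3]
  generalize (∑ k, Real.log (1 + Pk k * a k ^ 2 / σ2 * rstar)) = S
  field_simp
  all_goals ring

private lemma T_nonneg {F K : ℕ} {σ2 : ℝ} (hσ : 0 < σ2)
    (a Pk : Fin K → ℝ) (ha : ∀ k, 0 < a k) (hPk : ∀ k, 0 < Pk k)
    {rstar : ℝ} (hρ : 0 < rstar) :
    (0:ℝ) ≤ (F : ℝ)⁻¹ * ∑ k : Fin K, Real.log (1 + Pk k * a k ^ 2 / σ2 * rstar)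
        + (rstar - Real.log rstar - 1) := by
  have h1 : (0:ℝ) ≤ ∑ k : Fin K, Real.log (1 + Pk k * a k ^ 2 / σ2 * rstar) := by
    refine Finset.sum_nonneg fun k _ => Real.log_nonneg ?_
    have : (0:ℝ) ≤ Pk k * a k ^ 2 / σ2 * rstar :=
      mul_nonneg (div_nonneg (mul_nonneg (hPk k).le (sq_nonneg _)) hσ.le) hρ.le
    linarith
  have h2 : Real.log rstar ≤ rstar - 1 := Real.log_le_sub_one_of_pos hρ
  have h3 : (0:ℝ) ≤ (F : ℝ)⁻¹ * ∑ k : Fin K, Real.log (1 + Pk k * a k ^ 2 / σ2 * rstar) :=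
    mul_nonneg (inv_nonneg.mpr (Nat.cast_nonneg F)) h1
  linarith

/-- any `V ∈ C₂` satisfying the allocation system
(`Σ_f v_{f,k} = P_k` for all `k`, and `Σ_k β_k v_{f,k} = 1/r* − 1` for all `f`)
is a global maximizer of the deterministic EMI over `C₂`. -/
theorem allocation_system_is_maximizer
    (F K : ℕ) (hF : 1 ≤ F) (hK : 1 ≤ K) (σ2 : ℝ) (hσ : 0 < σ2)
    (a Pk : Fin K → ℝ) (ha : ∀ k, 0 < a k) (hPk : ∀ k, 0 < Pk k)
    (rstar : ℝ) (hr1 : rstar ∈ Set.Ioc (0 : ℝ) 1)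
    (hr2 : rstar = (1 + (F : ℝ)⁻¹ *
        ∑ k, Pk k * (a k) ^ 2 / (σ2 + Pk k * (a k) ^ 2 * rstar))⁻¹)
    (V : Matrix (Fin F) (Fin K) ℝ)
    (hV1 : ∀ f k, 0 ≤ V f k) (hV2 : ∀ k, ∑ f, V f k ≤ Pk k)
    (halloc1 : ∀ k, ∑ f, V f k = Pk k)
    (halloc2 : ∀ f, ∑ k, (a k) ^ 2 / (σ2 + Pk k * (a k) ^ 2 * rstar) * V f k
        = 1 / rstar - 1) :
    ∀ V' : Matrix (Fin F) (Fin K) ℝ,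
      (∀ f k, 0 ≤ V' f k) → (∀ k, ∑ f, V' f k ≤ Pk k) →
      detEMI σ2 a V' ≤ detEMI σ2 a V := by
  intro V' hV1' hV2'
  have hρ : 0 < rstar := hr1.1
  have hex : ∃ r : Fin F → ℝ, ∃ rt : Fin K → ℝ, FPsol σ2 a V r rt :=
    ⟨_, _, FPsol_V hσ a Pk ha hPk hr1 V halloc1 halloc2⟩
  have hVval : detEMI σ2 a V
      = (F : ℝ)⁻¹ * ∑ k, Real.log (1 + Pk k * a k ^ 2 / σ2 * rstar)
        + (rstar - Real.log rstar - 1) := by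
    rw [detEMI, dif_pos hex]
    exact detEMIbar_V_value hF hσ a Pk ha hPk hρ V hV1 halloc1 halloc2
      hex.choose_spec.choose_spec
  rw [hVval]
  by_cases h' : ∃ r : Fin F → ℝ, ∃ rt : Fin K → ℝ, FPsol σ2 a V' r rt
  · rw [detEMI, dif_pos h']
    exact detEMIbar_le_T hF hσ a Pk ha hPk hρ V' hV1' hV2'
      h'.choose_spec.choose_spec
  · rw [detEMI, dif_neg h']
    exact T_nonneg hσ a Pk ha hPk hρ
end

section
/- If V ∈ C₂ satisfies the allocation system, namely Σ_{f=1}^F v_{f,k} = P_k for every k and Σ_{k=1}^K β_k v_{f,k} = 1/r* − 1 for every f, then the unique solution (r, r̃) ∈ (0,1]^F × (0,1]^K of the fixed-point system associated with V satisfies r_f = r* for every f and r̃_k = r̃_k* for every k, and moreover J̄(V,σ²) = −(1/F) Σ_{k=1}^K log r̃_k* − log r* − (r*/(σ²F)) Σ_{k=1}^K P_k a_k² r̃_k*. -/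
open MeasureTheory ProbabilityTheory Matrix

lemma fp_reduced {F K : ℕ} {σ2 : ℝ} (hσ : 0 < σ2) {a : Fin K → ℝ}
    {V : Matrix (Fin F) (Fin K) ℝ} (hV : ∀ f k, 0 ≤ V f k)
    {r : Fin F → ℝ} {rt : Fin K → ℝ} (hr : ∀ f, 0 ≤ r f)
    (hfp : IsFP σ2 a V r rt) (f : Fin F) :
    r f = (1 + ∑ k, V f k * (a k) ^ 2 / (σ2 + (a k) ^ 2 * ∑ f', V f' k * r f'))⁻¹ := by
  have hX : ∀ k : Fin K, 0 ≤ ∑ f', V f' k * r f' := fun k =>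
    Finset.sum_nonneg fun f' _ => mul_nonneg (hV f' k) (hr f')
  rw [hfp.1 f]
  congr 2
  rw [Finset.mul_sum]
  refine Finset.sum_congr rfl fun k _ => ?_
  rw [hfp.2 k]
  have hD : (0:ℝ) < σ2 + (a k) ^ 2 * ∑ f', V f' k * r f' := by
    have := hX k; positivity
  have h1 : (1 + (a k) ^ 2 / σ2 * ∑ f', V f' k * r f')
      = (σ2 + (a k) ^ 2 * ∑ f', V f' k * r f') / σ2 := by
    field_simp
  rw [h1, inv_div]
  field_simp

lemma fp_le_s8 {F K : ℕ} (hF : 0 < F) {σ2 : ℝ} (hσ : 0 < σ2) {a : Fin K → ℝ}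
    {V : Matrix (Fin F) (Fin K) ℝ} (hV : ∀ f k, 0 ≤ V f k) {r s : Fin F → ℝ}
    (hr : ∀ f, 0 < r f) (hs : ∀ f, 0 < s f)
    (hfr : ∀ f, r f = (1 + ∑ k, V f k * (a k) ^ 2 / (σ2 + (a k) ^ 2 * ∑ f', V f' k * r f'))⁻¹)
    (hfs : ∀ f, s f = (1 + ∑ k, V f k * (a k) ^ 2 / (σ2 + (a k) ^ 2 * ∑ f', V f' k * s f'))⁻¹) :
    ∀ f, s f ≤ r f := by
  have hne : (Finset.univ : Finset (Fin F)).Nonempty := by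
    have : Nonempty (Fin F) := Fin.pos_iff_nonempty.mp hF
    exact Finset.univ_nonempty
  set t := Finset.univ.sup' hne (fun f => s f / r f) with htdef
  obtain ⟨f0, -, hf0⟩ := Finset.exists_mem_eq_sup' hne (fun f => s f / r f)
  have htle : ∀ f, s f ≤ t * r f := by
    intro f
    have h1 : s f / r f ≤ t := Finset.le_sup' (fun f => s f / r f) (Finset.mem_univ f)
    have h2 := mul_le_mul_of_nonneg_right h1 (hr f).le
    rwa [div_mul_cancel₀ _ (hr f).ne'] at h2
  have ht1 : t ≤ 1 := by
    by_contra hcon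
    push_neg at hcon
    set X : Fin K → ℝ := fun k => ∑ f', V f' k * r f' with hXdef
    set Y : Fin K → ℝ := fun k => ∑ f', V f' k * s f' with hYdef
    have hX : ∀ k, 0 ≤ X k := fun k =>
      Finset.sum_nonneg fun f' _ => mul_nonneg (hV f' k) (hr f').le
    have hY : ∀ k, 0 ≤ Y k := fun k =>
      Finset.sum_nonneg fun f' _ => mul_nonneg (hV f' k) (hs f').le
    have hYX : ∀ k, Y k ≤ t * X k := by
      intro k
      have : ∀ f' ∈ Finset.univ, V f' k * s f' ≤ V f' k * (t * r f') := fun f' _ =>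
        mul_le_mul_of_nonneg_left (htle f') (hV f' k)
      calc Y k ≤ ∑ f', V f' k * (t * r f') := Finset.sum_le_sum this
        _ = t * X k := by rw [hXdef, Finset.mul_sum]; exact Finset.sum_congr rfl fun f' _ => by ring
    set A := ∑ k, V f0 k * (a k) ^ 2 / (σ2 + (a k) ^ 2 * Y k) with hAdef
    set B := ∑ k, V f0 k * (a k) ^ 2 / (σ2 + (a k) ^ 2 * X k) with hBdef
    have hDpos : ∀ (Z : Fin K → ℝ), (∀ k, 0 ≤ Z k) → ∀ k, (0:ℝ) < σ2 + (a k) ^ 2 * Z k :=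
      fun Z hZ k => add_pos_of_pos_of_nonneg hσ (mul_nonneg (sq_nonneg _) (hZ k))
    have hA0 : 0 ≤ A := Finset.sum_nonneg fun k _ =>
      div_nonneg (mul_nonneg (hV f0 k) (sq_nonneg _)) (hDpos Y hY k).le
    have hB_le : B ≤ t * A := by
      rw [hAdef, Finset.mul_sum]
      refine Finset.sum_le_sum fun k _ => ?_
      have hDY : (0:ℝ) < σ2 + (a k) ^ 2 * Y k := hDpos Y hY k
      have hDX : (0:ℝ) < σ2 + (a k) ^ 2 * X k := hDpos X hX k
      have key : σ2 + (a k) ^ 2 * Y k ≤ t * (σ2 + (a k) ^ 2 * X k) := by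
        have h1 : (a k) ^ 2 * Y k ≤ (a k) ^ 2 * (t * X k) :=
          mul_le_mul_of_nonneg_left (hYX k) (sq_nonneg (a k))
        nlinarith [hX k, sq_nonneg (a k)]
      have hc : 0 ≤ V f0 k * (a k) ^ 2 := mul_nonneg (hV f0 k) (sq_nonneg _)
      rw [mul_div_assoc', div_le_div_iff₀ hDX hDY]
      nlinarith [mul_le_mul_of_nonneg_left key hc]
    have hsf0 : s f0 = (1 + A)⁻¹ := hfs f0
    have hrf0 : r f0 = (1 + B)⁻¹ := hfr f0
    have heq : s f0 = t * r f0 := by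
      rw [htdef, hf0, div_mul_cancel₀ _ (hr f0).ne']
    have h1A : (0:ℝ) < 1 + A := by linarith
    have h1B : (0:ℝ) < 1 + B := by
      have : 0 ≤ B := Finset.sum_nonneg fun k _ =>
        div_nonneg (mul_nonneg (hV f0 k) (sq_nonneg _)) (hDpos X hX k).le
      linarith
    rw [hsf0, hrf0] at heq
    have heq2 : 1 + B = t * (1 + A) := by
      field_simp at heq
      -- heq : (1 + B) = t * (1 + A) up to permutation; handle below
      nlinarith [heq, h1A, h1B]
    nlinarith [hB_le, hcon, hA0]
  intro f
  calc s f ≤ t * r f := htle f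
    _ ≤ 1 * r f := mul_le_mul_of_nonneg_right ht1 (hr f).le
    _ = r f := one_mul _

/-- if `V ∈ C₂` satisfies the allocation system, then the solution of the
fixed-point system associated with `V` satisfies `r_f = r*`, `r̃_k = r̃_k*`, and the
deterministic EMI has the stated closed form. -/
theorem allocation_system_fixed_point_and_value
    (F K : ℕ) (hF : 1 ≤ F) (hK : 1 ≤ K) (σ2 : ℝ) (hσ : 0 < σ2)
    (a Pk : Fin K → ℝ) (ha : ∀ k, 0 < a k) (hPk : ∀ k, 0 < Pk k)
    (rstar : ℝ) (hr1 : rstar ∈ Set.Ioc (0 : ℝ) 1)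
    (hr2 : rstar = (1 + (F : ℝ)⁻¹ *
        ∑ k, Pk k * (a k) ^ 2 / (σ2 + Pk k * (a k) ^ 2 * rstar))⁻¹)
    (V : Matrix (Fin F) (Fin K) ℝ)
    (hV1 : ∀ f k, 0 ≤ V f k) (hV2 : ∀ k, ∑ f, V f k ≤ Pk k)
    (halloc1 : ∀ k, ∑ f, V f k = Pk k)
    (halloc2 : ∀ f, ∑ k, (a k) ^ 2 / (σ2 + Pk k * (a k) ^ 2 * rstar) * V f k
        = 1 / rstar - 1) :
    ∀ (r : Fin F → ℝ) (rt : Fin K → ℝ),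
      (∀ f, r f ∈ Set.Ioc (0 : ℝ) 1) → (∀ k, rt k ∈ Set.Ioc (0 : ℝ) 1) →
      IsFP σ2 a V r rt →
      (∀ f, r f = rstar) ∧
      (∀ k, rt k = σ2 / (σ2 + Pk k * (a k) ^ 2 * rstar)) ∧
      detEMIbar σ2 a V r rt =
        -((F : ℝ)⁻¹ * ∑ k, Real.log (σ2 / (σ2 + Pk k * (a k) ^ 2 * rstar)))
        - Real.log rstar
        - rstar / (σ2 * F) *
            ∑ k, Pk k * (a k) ^ 2 * (σ2 / (σ2 + Pk k * (a k) ^ 2 * rstar)) := by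
  intro r rt hrmem hrtmem hfp
  have hrs : 0 < rstar := hr1.1
  have hd : ∀ k, (0:ℝ) < σ2 + Pk k * (a k) ^ 2 * rstar := fun k =>
    add_pos hσ (mul_pos (mul_pos (hPk k) (pow_pos (ha k) 2)) hrs)
  have hFpos : 0 < F := hF
  -- the candidate constant solution
  have hfp2 : IsFP σ2 a V (fun _ => rstar) (fun k => σ2 / (σ2 + Pk k * (a k) ^ 2 * rstar)) := by
    constructor
    · intro f
      have hsum : σ2⁻¹ * ∑ k, V f k * (a k) ^ 2 * (σ2 / (σ2 + Pk k * (a k) ^ 2 * rstar))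
          = 1 / rstar - 1 := by
        rw [← halloc2 f, Finset.mul_sum]
        refine Finset.sum_congr rfl fun k _ => ?_
        field_simp
      rw [hsum]
      have : (1 + (1 / rstar - 1)) = rstar⁻¹ := by field_simp; ring
      rw [this, inv_inv]
    · intro k
      have hsum : ∑ f, V f k * rstar = Pk k * rstar := by
        rw [← Finset.sum_mul, halloc1 k]
      rw [hsum]
      have : (1 + (a k) ^ 2 / σ2 * (Pk k * rstar))
          = (σ2 + Pk k * (a k) ^ 2 * rstar) / σ2 := by field_simp
      rw [this, inv_div]
  have hrpos : ∀ f, 0 < r f := fun f => (hrmem f).1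
  have hspos : ∀ f : Fin F, (0:ℝ) < (fun _ : Fin F => rstar) f := fun _ => hrs
  have hrr := fp_reduced hσ hV1 (fun f => (hrpos f).le) hfp
  have hss := fp_reduced hσ hV1 (fun _ => hrs.le) hfp2
  have hle1 := fp_le_s8 hFpos hσ hV1 hrpos hspos hrr hss
  have hle2 := fp_le_s8 hFpos hσ hV1 hspos hrpos hss hrr
  have hreq : ∀ f, r f = rstar := fun f => le_antisymm (hle2 f) (hle1 f)
  have hrteq : ∀ k, rt k = σ2 / (σ2 + Pk k * (a k) ^ 2 * rstar) := by
    intro k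
    rw [hfp.2 k]
    have h1 : ∑ f, V f k * r f = ∑ f, V f k * rstar :=
      Finset.sum_congr rfl fun f _ => by rw [hreq f]
    rw [h1]
    exact (hfp2.2 k).symm
  refine ⟨hreq, hrteq, ?_⟩
  -- now the value computation
  have hFne : (F:ℝ) ≠ 0 := Nat.cast_ne_zero.mpr hFpos.ne'
  unfold detEMIbar
  have e1 : ∑ k, Real.log (1 + (a k) ^ 2 / σ2 * ∑ f, V f k * r f)
      = -∑ k, Real.log (σ2 / (σ2 + Pk k * (a k) ^ 2 * rstar)) := by
    rw [← Finset.sum_neg_distrib]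
    refine Finset.sum_congr rfl fun k _ => ?_
    have h1 : ∑ f, V f k * r f = Pk k * rstar := by
      rw [Finset.sum_congr rfl fun f _ => by rw [hreq f], ← Finset.sum_mul, halloc1 k]
    rw [h1]
    have h2 : (1 + (a k) ^ 2 / σ2 * (Pk k * rstar))
        = (σ2 + Pk k * (a k) ^ 2 * rstar) / σ2 := by field_simp
    rw [h2, Real.log_div (hd k).ne' hσ.ne', Real.log_div hσ.ne' (hd k).ne']
    ring
  have e2 : ∑ f : Fin F, Real.log (1 + σ2⁻¹ * ∑ k, V f k * (a k) ^ 2 * rt k)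
      = -(F * Real.log rstar) := by
    have h1 : ∀ f : Fin F, (1 + σ2⁻¹ * ∑ k, V f k * (a k) ^ 2 * rt k) = rstar⁻¹ := by
      intro f
      have h := hfp.1 f
      rw [hreq f] at h
      rw [h, inv_inv]
    rw [Finset.sum_congr rfl fun f _ => by rw [h1 f, Real.log_inv]]
    simp [Finset.sum_const, Finset.card_univ, mul_comm]
  have e3 : ∑ f, ∑ k, V f k * (a k) ^ 2 * r f * rt k
      = rstar * ∑ k, Pk k * (a k) ^ 2 * (σ2 / (σ2 + Pk k * (a k) ^ 2 * rstar)) := by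
    rw [Finset.sum_comm, Finset.mul_sum]
    refine Finset.sum_congr rfl fun k _ => ?_
    have h1 : ∀ f : Fin F, V f k * (a k) ^ 2 * r f * rt k
        = V f k * ((a k) ^ 2 * rstar * (σ2 / (σ2 + Pk k * (a k) ^ 2 * rstar))) := by
      intro f; rw [hreq f, hrteq k]; ring
    rw [Finset.sum_congr rfl fun f _ => h1 f, ← Finset.sum_mul, halloc1 k]
    ring
  rw [e1, e2, e3]
  field_simp
  have hc : ∀ x, σ2 + rstar * Pk x * a x ^ 2 = σ2 + Pk x * a x ^ 2 * rstar := fun x => by ring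
  simp only [hc]
  ring
end

section
/- Fix vectors r ∈ (0,∞)^F and r̃ ∈ (0,∞)^K, and regard G̃(V) := G(V, r, r̃) as a function of the entries of V with (r, r̃) held constant. If (r, r̃) satisfies the fixed-point system associated with V, then for every f = 1..F and k = 1..K the partial derivative of G̃ with respect to v_{f,k}, evaluated at V, equals (1/(σ²F))·a_k²·r̃_k·r_f. -/
open MeasureTheory ProbabilityTheory Matrix

/-- with `(r, r̃)` held constant and satisfying the fixed-point system
associated with `V`, the partial derivative of `G̃(V) = G(V, r, r̃)` with respect to the
entry `v_{f,k}`, evaluated at `V`, equals `(1/(σ²F))·a_k²·r̃_k·r_f`. -/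
theorem partial_derivative_in_V
    (F K : ℕ) (σ2 : ℝ) (hσ : 0 < σ2)
    (a : Fin K → ℝ) (ha : ∀ k, 0 < a k)
    (V : Matrix (Fin F) (Fin K) ℝ) (hV : ∀ f k, 0 ≤ V f k)
    (r : Fin F → ℝ) (rt : Fin K → ℝ)
    (hr : ∀ f, 0 < r f) (hrt : ∀ k, 0 < rt k)
    (hfp : IsFP σ2 a V r rt) :
    ∀ (f : Fin F) (k : Fin K),
      HasDerivAt
        (fun t => detEMIbar σ2 a (V.updateRow f (Function.update (V f) k t)) r rt)
        ((σ2 * F)⁻¹ * (a k) ^ 2 * rt k * r f) (V f k) := by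
  intro f k
  obtain ⟨hfp1, hfp2⟩ := hfp
  have hσ' : σ2 ≠ 0 := ne_of_gt hσ
  have hF : (0:ℝ) < (F:ℝ) := by exact_mod_cast Fin.pos f
  set t0 := V f k with ht0
  have hW : ∀ (t : ℝ) (f' : Fin F) (k' : Fin K),
      (V.updateRow f (Function.update (V f) k t)) f' k'
        = if f' = f then (if k' = k then t else V f k') else V f' k' := by
    intro t f' k'
    rcases eq_or_ne f' f with h | h
    · subst h; simp [Function.update_apply]
    · simp [Matrix.updateRow_ne h, h]
  have hV0 : V.updateRow f (Function.update (V f) k t0) = V := by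
    show V.updateRow f (Function.update (V f) k (V f k)) = V
    simp
  -- derivative of column sums
  have hS1 : ∀ k' : Fin K,
      HasDerivAt (fun t => ∑ f', (V.updateRow f (Function.update (V f) k t)) f' k' * r f')
        (if k' = k then r f else 0) t0 := by
    intro k'
    have h : ∀ f' ∈ Finset.univ, HasDerivAt
        (fun t => (V.updateRow f (Function.update (V f) k t)) f' k' * r f')
        (if f' = f then (if k' = k then r f' else 0) else 0) t0 := by
      intro f' _
      simp only [hW]
      rcases eq_or_ne f' f with h1 | h1
      · subst h1
        rcases eq_or_ne k' k with h2 | h2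
        · simpa [h2] using (hasDerivAt_id t0).mul_const (r f')
        · simpa [h2] using hasDerivAt_const t0 (V f' k' * r f')
      · simpa [h1] using hasDerivAt_const t0 (V f' k' * r f')
    have hs := HasDerivAt.fun_sum h
    convert! hs using 1
    rcases eq_or_ne k' k with h2 | h2 <;> simp [h2, Finset.sum_ite_eq']
  -- derivative of row sums
  have hS2 : ∀ f' : Fin F,
      HasDerivAt (fun t => ∑ k', (V.updateRow f (Function.update (V f) k t)) f' k' * (a k')^2 * rt k')
        (if f' = f then (a k)^2 * rt k else 0) t0 := by
    intro f'
    have h : ∀ k' ∈ Finset.univ, HasDerivAt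
        (fun t => (V.updateRow f (Function.update (V f) k t)) f' k' * (a k')^2 * rt k')
        (if k' = k then (if f' = f then (a k')^2 * rt k' else 0) else 0) t0 := by
      intro k' _
      simp only [hW]
      rcases eq_or_ne f' f with h1 | h1
      · subst h1
        rcases eq_or_ne k' k with h2 | h2
        · simpa [h2] using ((hasDerivAt_id t0).mul_const ((a k')^2)).mul_const (rt k')
        · simpa [h2] using hasDerivAt_const t0 (V f' k' * (a k')^2 * rt k')
      · simpa [h1] using hasDerivAt_const t0 (V f' k' * (a k')^2 * rt k')
    have hs := HasDerivAt.fun_sum h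
    convert! hs using 1
    rcases eq_or_ne f' f with h1 | h1 <;> simp [h1, Finset.sum_ite_eq']
  -- derivative of the double sum
  have hS3 : HasDerivAt
      (fun t => ∑ f', ∑ k', (V.updateRow f (Function.update (V f) k t)) f' k' * (a k')^2 * r f' * rt k')
      ((a k)^2 * r f * rt k) t0 := by
    have h : ∀ f' ∈ Finset.univ, HasDerivAt
        (fun t => ∑ k', (V.updateRow f (Function.update (V f) k t)) f' k' * (a k')^2 * r f' * rt k')
        (if f' = f then (a k)^2 * r f * rt k else 0) t0 := by
      intro f' _
      have h2 : ∀ k' ∈ Finset.univ, HasDerivAt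
          (fun t => (V.updateRow f (Function.update (V f) k t)) f' k' * (a k')^2 * r f' * rt k')
          (if k' = k then (if f' = f then (a k')^2 * r f' * rt k' else 0) else 0) t0 := by
        intro k' _
        simp only [hW]
        rcases eq_or_ne f' f with h1 | h1
        · subst h1
          rcases eq_or_ne k' k with h2 | h2
          · simpa [h2] using (((hasDerivAt_id t0).mul_const ((a k')^2)).mul_const (r f')).mul_const (rt k')
          · simpa [h2] using hasDerivAt_const t0 (V f' k' * (a k')^2 * r f' * rt k')
        · simpa [h1] using hasDerivAt_const t0 (V f' k' * (a k')^2 * r f' * rt k')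
      have hs := HasDerivAt.fun_sum h2
      convert! hs using 1
      rcases eq_or_ne f' f with h1 | h1 <;> simp [h1, Finset.sum_ite_eq']
    have hs := HasDerivAt.fun_sum h
    convert! hs using 1
    simp [Finset.sum_ite_eq']
  -- log terms, first sum
  have hL1 : ∀ k' : Fin K, HasDerivAt
      (fun t => Real.log (1 + (a k')^2 / σ2 * ∑ f', (V.updateRow f (Function.update (V f) k t)) f' k' * r f'))
      (if k' = k then (a k)^2 / σ2 * r f * rt k else 0) t0 := by
    intro k'
    have hpos : (0:ℝ) < 1 + (a k')^2 / σ2 * ∑ f', V f' k' * r f' := by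
      have hs : (0:ℝ) ≤ ∑ f', V f' k' * r f' :=
        Finset.sum_nonneg fun f' _ => mul_nonneg (hV f' k') (hr f').le
      have : (0:ℝ) ≤ (a k')^2 / σ2 * ∑ f', V f' k' * r f' :=
        mul_nonneg (div_nonneg (sq_nonneg _) hσ.le) hs
      linarith
    have hinner := ((hS1 k').const_mul ((a k')^2 / σ2)).const_add 1
    have hne : (1 + (a k')^2 / σ2 * ∑ f', (V.updateRow f (Function.update (V f) k t0)) f' k' * r f') ≠ 0 := by
      rw [hV0]; exact ne_of_gt hpos
    have hlog := hinner.log hne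
    convert hlog using 1
    rw [hV0]
    rcases eq_or_ne k' k with h2 | h2
    · subst h2
      rw [if_pos rfl, if_pos rfl, div_eq_mul_inv _ (1 + (a k')^2 / σ2 * ∑ f', V f' k' * r f'),
        ← hfp2 k']
    · simp [h2]
  -- log terms, second sum
  have hL2 : ∀ f' : Fin F, HasDerivAt
      (fun t => Real.log (1 + σ2⁻¹ * ∑ k', (V.updateRow f (Function.update (V f) k t)) f' k' * (a k')^2 * rt k'))
      (if f' = f then σ2⁻¹ * ((a k)^2 * rt k) * r f else 0) t0 := by
    intro f'
    have hpos : (0:ℝ) < 1 + σ2⁻¹ * ∑ k', V f' k' * (a k')^2 * rt k' := by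
      have hs : (0:ℝ) ≤ ∑ k', V f' k' * (a k')^2 * rt k' :=
        Finset.sum_nonneg fun k' _ =>
          mul_nonneg (mul_nonneg (hV f' k') (sq_nonneg _)) (hrt k').le
      have : (0:ℝ) ≤ σ2⁻¹ * ∑ k', V f' k' * (a k')^2 * rt k' :=
        mul_nonneg (inv_nonneg.mpr hσ.le) hs
      linarith
    have hinner := ((hS2 f').const_mul σ2⁻¹).const_add 1
    have hne : (1 + σ2⁻¹ * ∑ k', (V.updateRow f (Function.update (V f) k t0)) f' k' * (a k')^2 * rt k') ≠ 0 := by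
      rw [hV0]; exact ne_of_gt hpos
    have hlog := hinner.log hne
    convert hlog using 1
    rw [hV0]
    rcases eq_or_ne f' f with h1 | h1
    · subst h1
      rw [if_pos rfl, if_pos rfl, div_eq_mul_inv, ← hfp1 f']
    · simp [h1]
  -- assemble
  have hA := (HasDerivAt.fun_sum (u := Finset.univ) (fun k' _ => hL1 k')).const_mul ((F:ℝ)⁻¹)
  have hB := (HasDerivAt.fun_sum (u := Finset.univ) (fun f' _ => hL2 f')).const_mul ((F:ℝ)⁻¹)
  have hC := hS3.const_mul ((σ2 * F)⁻¹)
  have htot := (hA.add hB).sub hC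
  simp only [detEMIbar]
  convert! htot using 1
  simp only [Finset.sum_ite_eq', Finset.mem_univ, if_true]
  field_simp
  ring
end

section
/- Let M ∈ ℂ^{F×F} be a Hermitian positive semidefinite matrix. For every σ² > 0, (1/F)·log det(I_F + (σ²)^{-1} M) = ∫_{σ²}^{∞} ( 1/z − (1/(zF))·Tr[(I_F + z^{-1} M)^{-1}] ) dz, the integrand being nonnegative and integrable on (σ², ∞). -/
open MeasureTheory Matrix

-- scalar lemma
lemma scalar_aux {a t : ℝ} (ha : 0 < a) (ht : 0 ≤ t) :
    IntegrableOn (fun z : ℝ => z⁻¹ - (z + t)⁻¹) (Set.Ioi a) ∧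
    ∫ z in Set.Ioi a, (z⁻¹ - (z + t)⁻¹) = Real.log (1 + a⁻¹ * t) := by
  have hderiv : ∀ x ∈ Set.Ici a, HasDerivAt (fun z => Real.log z - Real.log (z + t))
      (x⁻¹ - (x + t)⁻¹) x := by
    intro x hx
    have hx0 : 0 < x := lt_of_lt_of_le ha hx
    have hxt : (0:ℝ) < x + t := by linarith
    have h1 : HasDerivAt Real.log x⁻¹ x := Real.hasDerivAt_log hx0.ne'
    have h3 : HasDerivAt (fun z : ℝ => z + t) 1 x := (hasDerivAt_id x).add_const t
    have h2 : HasDerivAt (fun z : ℝ => Real.log (z + t)) (x + t)⁻¹ x := by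
      have h4 := (Real.hasDerivAt_log hxt.ne').comp x h3
      rw [mul_one] at h4
      exact h4
    exact h1.sub h2
  have hnonneg : ∀ x ∈ Set.Ioi a, 0 ≤ x⁻¹ - (x + t)⁻¹ := by
    intro x hx
    have hx0 : 0 < x := ha.trans hx
    have : (x + t)⁻¹ ≤ x⁻¹ := by
      apply inv_anti₀ hx0; linarith
    linarith
  have htends : Filter.Tendsto (fun z => Real.log z - Real.log (z + t)) Filter.atTop (nhds 0) := by
    have h0 : Filter.Tendsto (fun z : ℝ => 1 + t / z) Filter.atTop (nhds 1) := by
      simpa using (tendsto_const_nhds (x := (1:ℝ))).add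
        (Filter.Tendsto.div_atTop (tendsto_const_nhds (x := t)) Filter.tendsto_id)
    have h1 : Filter.Tendsto (fun z : ℝ => -Real.log (1 + t / z)) Filter.atTop (nhds 0) := by
      have := (Real.continuousAt_log (x := 1) one_ne_zero).tendsto.comp h0
      simpa using this.neg
    apply h1.congr'
    filter_upwards [Filter.eventually_gt_atTop 0] with z hz
    have hzt : (0:ℝ) < z + t := by linarith
    rw [show (1 + t / z) = (z + t) / z by field_simp, Real.log_div hzt.ne' hz.ne']
    ring
  have hint := integrableOn_Ioi_deriv_of_nonneg' hderiv hnonneg htends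
  refine ⟨hint, ?_⟩
  rw [integral_Ioi_of_hasDerivAt_of_nonneg' hderiv hnonneg htends]
  have hat : (0:ℝ) < a + t := by linarith
  rw [show (1 + a⁻¹ * t) = (a + t) / a by field_simp, Real.log_div hat.ne' ha.ne']
  ring
open MeasureTheory Matrix
open scoped ComplexOrder

lemma diag_conj {F : ℕ} {M : Matrix (Fin F) (Fin F) ℂ} (hM : M.PosSemidef) {z : ℝ}
    (hz : 0 < z) :
    (1 : Matrix (Fin F) (Fin F) ℂ) + z⁻¹ • M =
      (hM.1.eigenvectorUnitary : Matrix (Fin F) (Fin F) ℂ) *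
        diagonal (fun i => ((1 + z⁻¹ * hM.1.eigenvalues i : ℝ) : ℂ)) *
        star (hM.1.eigenvectorUnitary : Matrix (Fin F) (Fin F) ℂ) := by
  set U := (hM.1.eigenvectorUnitary : Matrix (Fin F) (Fin F) ℂ) with hUdef
  have hU : U * star U = 1 := (Matrix.mem_unitaryGroup_iff).mp hM.1.eigenvectorUnitary.2
  have key : diagonal (fun i => ((1 + z⁻¹ * hM.1.eigenvalues i : ℝ) : ℂ)) =
      1 + z⁻¹ • diagonal (RCLike.ofReal ∘ hM.1.eigenvalues) := by
    ext i j
    by_cases h : i = j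
    · subst h
      push_cast
      simp [Matrix.one_apply, Complex.real_smul]
    · simp [Matrix.diagonal_apply_ne _ h, Matrix.one_apply_ne h]
  rw [key, Matrix.mul_add, Matrix.add_mul, Matrix.mul_one, hU, mul_smul_comm, smul_mul_assoc]
  have hs := hM.1.spectral_theorem
  rw [Unitary.conjStarAlgAut_apply] at hs
  exact congrArg (fun X => (1 : Matrix (Fin F) (Fin F) ℂ) + z⁻¹ • X) hs

lemma det_re_eq {F : ℕ} {M : Matrix (Fin F) (Fin F) ℂ} (hM : M.PosSemidef) {z : ℝ}
    (hz : 0 < z) :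
    ((1 : Matrix (Fin F) (Fin F) ℂ) + z⁻¹ • M).det.re =
      ∏ i, (1 + z⁻¹ * hM.1.eigenvalues i) := by
  set U := (hM.1.eigenvectorUnitary : Matrix (Fin F) (Fin F) ℂ)
  have hU : U * star U = 1 := (Matrix.mem_unitaryGroup_iff).mp hM.1.eigenvectorUnitary.2
  have hdetU : U.det * (star U).det = 1 := by rw [← det_mul, hU, det_one]
  rw [diag_conj hM hz, det_mul, det_mul]
  have : U.det * (diagonal (fun i => ((1 + z⁻¹ * hM.1.eigenvalues i : ℝ) : ℂ))).det *
      (star U).det = (diagonal (fun i => ((1 + z⁻¹ * hM.1.eigenvalues i : ℝ) : ℂ))).det := by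
    rw [mul_right_comm, hdetU, one_mul]
  rw [this, det_diagonal]
  norm_cast

lemma trace_re_eq {F : ℕ} {M : Matrix (Fin F) (Fin F) ℂ} (hM : M.PosSemidef) {z : ℝ}
    (hz : 0 < z) (hev : ∀ i, 0 ≤ hM.1.eigenvalues i) :
    (((1 : Matrix (Fin F) (Fin F) ℂ) + z⁻¹ • M)⁻¹.trace).re =
      ∑ i, (1 + z⁻¹ * hM.1.eigenvalues i)⁻¹ := by
  set U := (hM.1.eigenvectorUnitary : Matrix (Fin F) (Fin F) ℂ)
  have hU : U * star U = 1 := (Matrix.mem_unitaryGroup_iff).mp hM.1.eigenvectorUnitary.2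
  have hU' : star U * U = 1 := (Matrix.mem_unitaryGroup_iff').mp hM.1.eigenvectorUnitary.2
  have hUinv : U⁻¹ = star U := Matrix.inv_eq_left_inv hU'
  have hsUinv : (star U)⁻¹ = U := Matrix.inv_eq_left_inv hU
  have hDinv : (diagonal (fun i => ((1 + z⁻¹ * hM.1.eigenvalues i : ℝ) : ℂ)))⁻¹ =
      diagonal (fun i => (((1 + z⁻¹ * hM.1.eigenvalues i : ℝ) : ℂ))⁻¹) := by
    apply Matrix.inv_eq_left_inv
    rw [diagonal_mul_diagonal]
    convert Matrix.diagonal_one with i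
    have h0 := hev i
    have hzi : (0:ℝ) < z⁻¹ := inv_pos.mpr hz
    have hpos : (0:ℝ) < 1 + z⁻¹ * hM.1.eigenvalues i := by nlinarith
    exact inv_mul_cancel₀ (by exact_mod_cast hpos.ne')
  rw [diag_conj hM hz, Matrix.mul_inv_rev, Matrix.mul_inv_rev, hUinv, hsUinv, hDinv,
    ← Matrix.mul_assoc, Matrix.trace_mul_cycle, hU', Matrix.one_mul, trace_diagonal]
  rw [Complex.re_sum]
  congr 1
  funext i
  norm_cast

open MeasureTheory ProbabilityTheory Matrix
open scoped ComplexOrder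

/-- the log-det as an integral of the trace term: the integrand is
nonnegative and integrable on `(σ²,∞)`, and
`(1/F)·log det(I + (σ²)⁻¹M) = ∫_{σ²}^∞ (1/z − (1/(zF))·Tr[(I + z⁻¹M)⁻¹]) dz`. -/
theorem logdet_integral_representation
    (F : ℕ) (hF : 1 ≤ F) (M : Matrix (Fin F) (Fin F) ℂ) (hM : M.PosSemidef)
    (σ2 : ℝ) (hσ : 0 < σ2) :
    (∀ z ∈ Set.Ioi σ2, 0 ≤ z⁻¹ - (z * F)⁻¹ * ((1 + z⁻¹ • M)⁻¹.trace).re) ∧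
    IntegrableOn (fun z : ℝ => z⁻¹ - (z * F)⁻¹ * ((1 + z⁻¹ • M)⁻¹.trace).re)
      (Set.Ioi σ2) ∧
    (F : ℝ)⁻¹ * Real.log ((1 + σ2⁻¹ • M).det.re) =
      ∫ z in Set.Ioi σ2, (z⁻¹ - (z * F)⁻¹ * ((1 + z⁻¹ • M)⁻¹.trace).re) := by
  set lam := hM.1.eigenvalues with hlam
  have hev : ∀ i, 0 ≤ lam i := fun i => hM.eigenvalues_nonneg i
  have hFne : (F : ℝ) ≠ 0 := Nat.cast_ne_zero.mpr (by omega)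
  set G : ℝ → ℝ := fun z => (F : ℝ)⁻¹ * ∑ i, (z⁻¹ - (z + lam i)⁻¹) with hG
  have heq : Set.EqOn (fun z : ℝ => z⁻¹ - (z * F)⁻¹ * ((1 + z⁻¹ • M)⁻¹.trace).re) G
      (Set.Ioi σ2) := by
    intro z hz
    have hz0 : 0 < z := hσ.trans hz
    have hterm : ∀ i ∈ Finset.univ, (1 + z⁻¹ * lam i)⁻¹ = z * (z + lam i)⁻¹ := by
      intro i _
      have h1 : (0:ℝ) < z + lam i := by have := hev i; linarith
      field_simp
    simp only [hG]
    rw [trace_re_eq hM hz0 hev, Finset.sum_congr rfl hterm, ← Finset.mul_sum,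
      Finset.sum_sub_distrib, Finset.sum_const, Finset.card_univ, Fintype.card_fin,
      nsmul_eq_mul]
    have hkey : (z * (F:ℝ))⁻¹ * (z * ∑ i, (z + lam i)⁻¹) = (F:ℝ)⁻¹ * ∑ i, (z + lam i)⁻¹ := by
      rw [mul_inv, mul_comm z⁻¹ ((F:ℝ))⁻¹, mul_assoc, ← mul_assoc z⁻¹ z,
        inv_mul_cancel₀ hz0.ne', one_mul]
    rw [hkey, mul_sub, ← mul_assoc, inv_mul_cancel₀ hFne, one_mul]
  have hGnonneg : ∀ z ∈ Set.Ioi σ2, 0 ≤ G z := by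
    intro z hz
    have hz0 : 0 < z := hσ.trans hz
    apply mul_nonneg (by positivity)
    apply Finset.sum_nonneg
    intro i _
    have h1 : (0:ℝ) < z + lam i := by have := hev i; linarith
    have : (z + lam i)⁻¹ ≤ z⁻¹ := by apply inv_anti₀ hz0; linarith [hev i]
    linarith
  have hint : ∀ i : Fin F, IntegrableOn (fun z : ℝ => z⁻¹ - (z + lam i)⁻¹) (Set.Ioi σ2) :=
    fun i => (scalar_aux hσ (hev i)).1
  have hGint : IntegrableOn G (Set.Ioi σ2) := by
    apply Integrable.const_mul
    exact integrable_finset_sum _ (fun i _ => hint i)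
  refine ⟨fun z hz => le_of_le_of_eq (hGnonneg z hz) (heq hz).symm, hGint.congr_fun heq.symm measurableSet_Ioi, ?_⟩
  rw [setIntegral_congr_fun measurableSet_Ioi heq]
  have hintG : ∫ z in Set.Ioi σ2, G z =
      (F : ℝ)⁻¹ * ∑ i, Real.log (1 + σ2⁻¹ * lam i) := by
    simp only [hG]
    rw [MeasureTheory.integral_const_mul, integral_finset_sum _ (fun i _ => hint i)]
    congr 1
    exact Finset.sum_congr rfl fun i _ => (scalar_aux hσ (hev i)).2
  rw [hintG, det_re_eq hM hσ]
  congr 1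
  rw [Real.log_prod]
  intro i _
  have h0 := hev i
  have hzi : (0:ℝ) < σ2⁻¹ := inv_pos.mpr hσ
  nlinarith
end
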